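/- arXiv:2207.06264 — 2 statements merged into one kernel-verified Lean document; each statement's English description precedes it below -/
import Mathlib

section
/- For all integers n ≥ 0 and j ≥ 0, d_{16j+15}(4n + 3) ≡ 0 (mod 16). -/
open PowerSeries Finset

section LowEqSection

variable {R : Type*} [CommRing R]

/-- Coefficients agree strictly below `c`. -/
def LowEq (c : ℕ) (f g : PowerSeries R) : Prop := ∀ i, i < c → coeff (R := R) i f = coeff (R := R) i g

lemma LowEq.refl {c : ℕ} (f : PowerSeries R) : LowEq c f f := fun _ _ => rfl

lemma LowEq.symm {c : ℕ} {f g : PowerSeries R} (h : LowEq c f g) : LowEq c g f :=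
  fun i hi => (h i hi).symm

lemma LowEq.trans {c : ℕ} {f g h : PowerSeries R} (h1 : LowEq c f g) (h2 : LowEq c g h) :
    LowEq c f h := fun i hi => (h1 i hi).trans (h2 i hi)

lemma LowEq.mul {c : ℕ} {f f' g g' : PowerSeries R} (hf : LowEq c f f') (hg : LowEq c g g') :
    LowEq c (f * g) (f' * g') := by
  intro i hi
  rw [coeff_mul, coeff_mul]
  refine Finset.sum_congr rfl fun p hp => ?_
  have hp' := Finset.HasAntidiagonal.mem_antidiagonal.mp hp
  rw [hf p.1 (by omega), hg p.2 (by omega)]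

lemma LowEq.pow_one {c : ℕ} {f : PowerSeries R} (hf : LowEq c f 1) (e : ℕ) :
    LowEq c (f ^ e) 1 := by
  induction e with
  | zero => simpa using LowEq.refl (R := R) 1
  | succ e ih =>
    have := ih.mul hf
    rw [one_mul] at this
    rw [pow_succ]
    exact this

lemma lowEq_one_sub_X_pow {c a : ℕ} (h : c ≤ a) : LowEq c ((1 : PowerSeries R) - X ^ a) 1 := by
  intro i hi
  rw [map_sub, coeff_X_pow, if_neg (by omega)]
  ring

lemma LowEq.prod_one {c : ℕ} {ι : Type*} {s : Finset ι} {f : ι → PowerSeries R}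
    (h : ∀ x ∈ s, LowEq c (f x) 1) : LowEq c (∏ x ∈ s, f x) 1 := by
  classical
  induction s using Finset.induction_on with
  | empty => simpa using LowEq.refl (R := R) 1
  | @insert a s' hx ih =>
    rw [Finset.prod_insert hx]
    have h1 := (h a (Finset.mem_insert_self a s')).mul (ih fun x hxs => h x (Finset.mem_insert_of_mem hxs))
    rw [one_mul] at h1
    exact h1

lemma LowEq.prod_subset {c : ℕ} {ι : Type*} {s t : Finset ι} {f : ι → PowerSeries R}
    (hst : s ⊆ t) (h : ∀ x ∈ t, x ∉ s → LowEq c (f x) 1) :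
    LowEq c (∏ x ∈ t, f x) (∏ x ∈ s, f x) := by
  classical
  rw [← Finset.prod_sdiff hst]
  have h1 : LowEq c (∏ x ∈ t \ s, f x) 1 :=
    LowEq.prod_one fun x hx => h x (Finset.mem_sdiff.mp hx).1 (Finset.mem_sdiff.mp hx).2
  have := h1.mul (LowEq.refl (∏ x ∈ s, f x))
  rw [one_mul] at this
  exact this

lemma coeff_lowEq_one_mul {c : ℕ} {f g : PowerSeries R} (hf : LowEq c f 1) {i : ℕ} (hi : i < c) :
    coeff (R := R) i (f * g) = coeff (R := R) i g := by
  rw [coeff_mul, Finset.sum_eq_single (0, i)]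
  · have h0 : coeff (R := R) 0 f = 1 := by
      have := hf 0 (by omega)
      simpa using this
    simp [h0]
  · rintro ⟨p, q⟩ hp hne
    have hpq := Finset.HasAntidiagonal.mem_antidiagonal.mp hp
    simp only at hpq
    have hp0 : p ≠ 0 := by
      rintro rfl
      exact hne (by simpa using hpq)
    have : coeff (R := R) p f = 0 := by
      have := hf p (by omega)
      rw [this, coeff_one, if_neg hp0]
    rw [this, zero_mul]
  · intro h
    exact absurd (Finset.HasAntidiagonal.mem_antidiagonal.mpr (by simp)) h

/-- If `f * g = 1` and `f` agrees with `1` below `c`, then so does `g`. -/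
lemma lowEq_inv_one {c : ℕ} {f g : PowerSeries R} (hfg : f * g = 1) (hf : LowEq c f 1) :
    LowEq c g 1 := by
  intro i hi
  have := coeff_lowEq_one_mul hf (g := g) hi
  rw [hfg] at this
  exact this.symm

end LowEqSection

section SuppSection

variable {R : Type*} [CommRing R]

/-- `f` is supported on exponents divisible by `c`. -/
def Supp (c : ℕ) (f : PowerSeries R) : Prop := ∀ i, ¬ c ∣ i → coeff (R := R) i f = 0

lemma Supp.one {c : ℕ} : Supp c (1 : PowerSeries R) := by
  intro i hi
  rw [coeff_one, if_neg]
  rintro rfl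
  exact hi (dvd_zero c)

lemma Supp.mul {c : ℕ} {f g : PowerSeries R} (hf : Supp c f) (hg : Supp c g) :
    Supp c (f * g) := by
  intro i hi
  rw [coeff_mul]
  refine Finset.sum_eq_zero fun p hp => ?_
  have hpq := Finset.HasAntidiagonal.mem_antidiagonal.mp hp
  by_cases h1 : c ∣ p.1
  · have h2 : ¬ c ∣ p.2 := fun h2 => hi (hpq ▸ dvd_add h1 h2)
    rw [hg p.2 h2, mul_zero]
  · rw [hf p.1 h1, zero_mul]

lemma Supp.add {c : ℕ} {f g : PowerSeries R} (hf : Supp c f) (hg : Supp c g) :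
    Supp c (f + g) := by
  intro i hi
  rw [map_add, hf i hi, hg i hi, add_zero]

lemma Supp.pow {c : ℕ} {f : PowerSeries R} (hf : Supp c f) (e : ℕ) : Supp c (f ^ e) := by
  induction e with
  | zero => simpa using Supp.one
  | succ e ih => rw [pow_succ]; exact ih.mul hf

lemma Supp.prod {c : ℕ} {ι : Type*} {s : Finset ι} {f : ι → PowerSeries R}
    (h : ∀ x ∈ s, Supp c (f x)) : Supp c (∏ x ∈ s, f x) := by
  classical
  induction s using Finset.induction_on with
  | empty => simpa using Supp.one
  | @insert a s' hx ih =>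
    rw [Finset.prod_insert hx]
    exact (h a (Finset.mem_insert_self a s')).mul (ih fun x hxs => h x (Finset.mem_insert_of_mem hxs))

lemma Supp.of_dvd {a c : ℕ} {f : PowerSeries R} (hac : a ∣ c) (hf : Supp c f) : Supp a f := by
  intro i hi
  exact hf i fun h => hi (dvd_trans hac h)

lemma supp_one_sub_X_pow {c a : ℕ} (h : c ∣ a) : Supp c ((1 : PowerSeries R) - X ^ a) := by
  intro i hi
  rw [map_sub, coeff_one, coeff_X_pow, if_neg, if_neg]
  · ring
  · rintro rfl; exact hi h
  · rintro rfl; exact hi (dvd_zero c)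

lemma supp_X_pow_sub {c a b : ℕ} (ha : c ∣ a) (hb : c ∣ b) :
    Supp c ((X : PowerSeries R) ^ a - X ^ b) := by
  intro i hi
  rw [map_sub, coeff_X_pow, coeff_X_pow, if_neg, if_neg]
  · ring
  · rintro rfl; exact hi hb
  · rintro rfl; exact hi ha

/-- Inverse of a supported series (with constant coefficient 1) is supported. -/
lemma Supp.inv {c : ℕ} {f g : PowerSeries R} (hfg : f * g = 1)
    (h0 : constantCoeff (R := R) f = 1) (hf : Supp c f) : Supp c g := by
  intro i
  induction i using Nat.strong_induction_on with
  | _ i IH =>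
    intro hi
    have hc := congrArg (coeff (R := R) i) hfg
    rw [coeff_mul, coeff_one] at hc
    have hi0 : i ≠ 0 := by rintro rfl; exact hi (dvd_zero c)
    rw [if_neg hi0] at hc
    have hsum : ∑ p ∈ antidiagonal i, coeff (R := R) p.1 f * coeff (R := R) p.2 g = coeff (R := R) i g := by
      rw [Finset.sum_eq_single (0, i)]
      · have h00 : coeff (R := R) 0 f = 1 := by
          rw [coeff_zero_eq_constantCoeff, h0]
        rw [h00, one_mul]
      · rintro ⟨p, q⟩ hp hne
        have hpq := Finset.HasAntidiagonal.mem_antidiagonal.mp hp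
        simp only at hpq
        have hp0 : p ≠ 0 := by
          rintro rfl
          exact hne (by simpa using hpq)
        by_cases h1 : c ∣ p
        · have h2 : ¬ c ∣ q := fun h2 => hi (hpq ▸ dvd_add h1 h2)
          have hqi : q < i := by omega
          rw [IH q hqi h2, mul_zero]
        · rw [hf p h1, zero_mul]
      · intro h
        exact absurd (Finset.HasAntidiagonal.mem_antidiagonal.mpr (by simp)) h
    rw [hsum] at hc
    exact hc

end SuppSection

section Inv1Section

variable {R : Type*} [CommRing R]

/-- Inverse of a power series with constant coefficient `1`. -/
noncomputable def inv1 (f : PowerSeries R) : PowerSeries R := f.invOfUnit 1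

lemma mul_inv1 {f : PowerSeries R} (h : constantCoeff (R := R) f = 1) : f * inv1 f = 1 :=
  PowerSeries.mul_invOfUnit f 1 (by simpa using h)

lemma inv_unique' {f g h : PowerSeries R} (h1 : f * g = 1) (h2 : f * h = 1) : g = h := by
  calc g = g * (f * h) := by rw [h2, mul_one]
  _ = (f * g) * h := by ring
  _ = h := by rw [h1, one_mul]

lemma cc_one_sub_X_pow {a : ℕ} (ha : a ≠ 0) : constantCoeff (R := R) ((1 : PowerSeries R) - X ^ a) = 1 := by
  rw [map_sub, map_one, map_pow, constantCoeff_X, zero_pow ha, sub_zero]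

lemma cc_prod {ι : Type*} {s : Finset ι} {f : ι → PowerSeries R}
    (h : ∀ x ∈ s, constantCoeff (R := R) (f x) = 1) : constantCoeff (R := R) (∏ x ∈ s, f x) = 1 := by
  rw [map_prod]
  exact Finset.prod_eq_one h

end Inv1Section

section CongSection

variable {R : Type*} [CommRing R]

lemma prod_cong2 {ι : Type*} {s : Finset ι} {f g : ι → PowerSeries R}
    (h : ∀ x ∈ s, ∃ b, f x = g x + 2 * b) :
    ∃ b, ∏ x ∈ s, f x = (∏ x ∈ s, g x) + 2 * b := by
  classical
  induction s using Finset.induction_on with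
  | empty => exact ⟨0, by simp⟩
  | @insert a s' hx ih =>
    obtain ⟨b, hb⟩ := ih fun x hxs => h x (Finset.mem_insert_of_mem hxs)
    obtain ⟨ba, hba⟩ := h a (Finset.mem_insert_self a s')
    refine ⟨g a * b + ba * ∏ x ∈ s', g x + 2 * (ba * b), ?_⟩
    rw [Finset.prod_insert hx, Finset.prod_insert hx, hb, hba]
    ring

lemma prod_cong2_supp {c : ℕ} {ι : Type*} {s : Finset ι} {f g : ι → PowerSeries R}
    (hg : ∀ x ∈ s, Supp c (g x))
    (h : ∀ x ∈ s, ∃ b, Supp c b ∧ f x = g x + 2 * b) :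
    ∃ b, Supp c b ∧ ∏ x ∈ s, f x = (∏ x ∈ s, g x) + 2 * b := by
  classical
  induction s using Finset.induction_on with
  | empty => exact ⟨0, fun i _ => by simp, by simp⟩
  | @insert a s' hx ih =>
    obtain ⟨b, hbS, hb⟩ := ih (fun x hxs => hg x (Finset.mem_insert_of_mem hxs))
      (fun x hxs => h x (Finset.mem_insert_of_mem hxs))
    obtain ⟨ba, hbaS, hba⟩ := h a (Finset.mem_insert_self a s')
    have hgs : Supp c (∏ x ∈ s', g x) := Supp.prod fun x hxs => hg x (Finset.mem_insert_of_mem hxs)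
    have hga : Supp c (g a) := hg a (Finset.mem_insert_self a s')
    refine ⟨g a * b + ba * ∏ x ∈ s', g x + 2 * (ba * b), ?_, ?_⟩
    · have h2 : Supp c (2 * (ba * b) : PowerSeries R) := by
        have := (hbaS.mul hbS).add (hbaS.mul hbS)
        rwa [show ba * b + ba * b = 2 * (ba * b) by ring] at this
      exact ((hga.mul hbS).add (hbaS.mul hgs)).add h2
    · rw [Finset.prod_insert hx, Finset.prod_insert hx, hb, hba]
      ring

end CongSection

section G2Section

variable (R : Type*) [CommRing R]

/-- Gaussian binomial coefficient in the variable `X^2`, as a power series. -/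
noncomputable def g2 : ℕ → ℕ → PowerSeries R
  | 0, 0 => 1
  | 0, _ + 1 => 0
  | _ + 1, 0 => 1
  | n + 1, k + 1 => g2 n k + X ^ (2 * (k + 1)) * g2 n (k + 1)

variable {R}

lemma g2_zero_right (n : ℕ) : g2 R n 0 = 1 := by cases n <;> rfl

lemma g2_succ_succ (n k : ℕ) :
    g2 R (n + 1) (k + 1) = g2 R n k + X ^ (2 * (k + 1)) * g2 R n (k + 1) := rfl

lemma g2_eq_zero_of_lt {n k : ℕ} (h : n < k) : g2 R n k = 0 := by
  induction n generalizing k with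
  | zero =>
    match k, h with
    | k + 1, _ => rfl
  | succ n ih =>
    match k, h with
    | k + 1, h =>
      rw [g2_succ_succ, ih (by omega), ih (by omega), mul_zero, add_zero]

lemma g2_diag (n : ℕ) : g2 R n n = 1 := by
  induction n with
  | zero => rfl
  | succ n ih =>
    rw [g2_succ_succ, ih, g2_eq_zero_of_lt (by omega), mul_zero, add_zero]

lemma Xpow_mul_Xpow {R : Type*} [CommRing R] {a b c : ℕ} (h : a + b = c) :
    (X : PowerSeries R) ^ a * X ^ b = X ^ c := by
  rw [← pow_add, h]

/-- second Pascal rule -/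
lemma g2_pascalB {n k : ℕ} (hk : k ≤ n) :
    g2 R (n + 1) (k + 1) = X ^ (2 * (n - k)) * g2 R n k + g2 R n (k + 1) := by
  induction n generalizing k with
  | zero =>
    have : k = 0 := by omega
    subst this
    rw [g2_succ_succ, g2_zero_right, g2_eq_zero_of_lt (show (0:ℕ) < 0 + 1 by omega)]
    simp
  | succ n ih =>
    rcases Nat.eq_or_lt_of_le hk with h | h
    · -- k = n + 1
      subst h
      rw [g2_diag, g2_diag, g2_eq_zero_of_lt (by omega)]
      simp
    · rcases k with _ | t
      · -- k = 0
        conv_lhs => rw [g2_succ_succ, ih (k := 0) (by omega)]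
        conv_rhs => rw [g2_succ_succ]
        rw [g2_zero_right, g2_zero_right]
        have hx : (X : PowerSeries R) ^ (2 * (0 + 1)) * X ^ (2 * (n - 0)) = X ^ (2 * (n + 1 - 0)) := by
          rw [← pow_add]; congr 1; omega
        linear_combination hx
      · -- k = t + 1, with t + 1 ≤ n
        have htn : t + 1 ≤ n := by omega
        conv_lhs => rw [g2_succ_succ, ih (k := t) (by omega), ih (k := t + 1) htn]
        conv_rhs => rw [g2_succ_succ (R := R) n (t + 1), g2_succ_succ (R := R) n t]
        have hx1 : (X : PowerSeries R) ^ (2 * (t + 1 + 1)) * X ^ (2 * (n - (t + 1))) = X ^ (2 * n + 2) := by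
          rw [← pow_add]; congr 1; omega
        have hx2 : (X : PowerSeries R) ^ (2 * (n + 1 - (t + 1))) * X ^ (2 * (t + 1)) = X ^ (2 * n + 2) := by
          rw [← pow_add]; congr 1; omega
        have hnt : 2 * (n - t) = 2 * (n + 1 - (t + 1)) := by omega
        rw [hnt]
        linear_combination g2 R n (t + 1) * hx1 - g2 R n (t + 1) * hx2

/-- the truncated product `∏_{k=1}^{t} (1 - X^{2k})` -/
noncomputable def Qp (t : ℕ) : PowerSeries R := ∏ m ∈ Finset.Ioc 0 t, (1 - X ^ (2 * m))

lemma Qp_zero : Qp (R := R) 0 = 1 := by simp [Qp]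

lemma Qp_succ (t : ℕ) : Qp (R := R) (t + 1) = Qp t * (1 - X ^ (2 * (t + 1))) := by
  rw [Qp, Qp, Finset.prod_Ioc_succ_top (Nat.zero_le t)]

lemma cc_Qp (t : ℕ) : constantCoeff (R := R) (Qp t) = 1 :=
  cc_prod fun m hm => cc_one_sub_X_pow (by have := (Finset.mem_Ioc.mp hm).1; omega)

/-- the `q`-Vandermonde/product formula: `g2 n k * Qp k * Qp (n-k) = Qp n`. -/
lemma g2_mul_Qp {n k : ℕ} (hk : k ≤ n) :
    g2 R n k * Qp k * Qp (n - k) = Qp n := by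
  induction n generalizing k with
  | zero =>
    have : k = 0 := by omega
    subst this
    simp [g2_zero_right, Qp_zero]
  | succ n ih =>
    rcases k with _ | k
    · simp [g2_zero_right, Qp_zero]
    · rcases Nat.eq_or_lt_of_le hk with h | h
      · -- k + 1 = n + 1
        have : k = n := by omega
        subst this
        rw [g2_diag]
        simp [Qp_zero]
      · have hk1n : k + 1 ≤ n := by omega
        obtain ⟨a, rfl⟩ : ∃ a, n = k + 1 + a := ⟨n - (k + 1), by omega⟩
        have ih1 := ih (k := k) (by omega)
        have ih2 := ih (k := k + 1) (by omega)
        rw [show k + 1 + a - k = a + 1 by omega, Qp_succ] at ih1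
        rw [show k + 1 + a - (k + 1) = a by omega, Qp_succ] at ih2
        rw [show k + 1 + a + 1 - (k + 1) = a + 1 by omega, g2_succ_succ, Qp_succ (k + 1 + a),
          Qp_succ a, Qp_succ k]
        linear_combination (1 - X ^ (2 * (k + 1))) * ih1 + X ^ (2 * (k + 1)) * (1 - X ^ (2 * (a + 1))) * ih2

end G2Section

section TTSection

variable {R : Type*} [CommRing R]

/-- exponent `(m - i)^2` as a natural number -/
def eexp (m i : ℕ) : ℕ := (((m : ℤ) - (i : ℤ)) ^ 2).toNat

lemma eexp_cast (m i : ℕ) : ((eexp m i : ℕ) : ℤ) = ((m : ℤ) - (i : ℤ)) ^ 2 :=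
  Int.toNat_of_nonneg (sq_nonneg _)

lemma sum_shift {M : ℕ} (h : ℕ → PowerSeries R) (htop : h (M + 1) = 0) :
    ∑ t ∈ Finset.range (M + 1), h (t + 1) = (∑ s ∈ Finset.range (M + 1), h s) - h 0 := by
  have e1 := Finset.sum_range_succ' h (M + 1)
  have e2 := Finset.sum_range_succ h (M + 1)
  rw [htop, add_zero] at e2
  rw [e2] at e1
  linear_combination -e1

lemma step_A (n : ℕ) (a : ℕ → PowerSeries R) :
    ∑ i ∈ Finset.range (n + 1 + 1), a i * g2 R (n + 1) i
      = ∑ t ∈ Finset.range (n + 1), (a (t + 1) + X ^ (2 * t) * a t) * g2 R n t := by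
  rw [Finset.sum_range_succ' (fun i => a i * g2 R (n + 1) i) (n + 1)]
  have e1 : ∀ t ∈ Finset.range (n + 1), a (t + 1) * g2 R (n + 1) (t + 1)
      = a (t + 1) * g2 R n t + (fun s => a s * X ^ (2 * s) * g2 R n s) (t + 1) := by
    intro t _
    rw [g2_succ_succ]
    ring
  rw [Finset.sum_congr rfl e1, Finset.sum_add_distrib,
    sum_shift (fun s => a s * X ^ (2 * s) * g2 R n s)
      (by show a (n + 1) * X ^ (2 * (n + 1)) * g2 R n (n + 1) = 0
          rw [g2_eq_zero_of_lt (by omega)]; ring)]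
  have e2 : ∀ t ∈ Finset.range (n + 1), (a (t + 1) + X ^ (2 * t) * a t) * g2 R n t
      = a (t + 1) * g2 R n t + a t * X ^ (2 * t) * g2 R n t := by
    intro t _
    ring
  rw [Finset.sum_congr rfl e2, Finset.sum_add_distrib]
  simp only [g2_zero_right]
  ring

lemma step_B (n : ℕ) (b : ℕ → PowerSeries R) :
    ∑ t ∈ Finset.range (n + 1 + 1), b t * g2 R (n + 1) t
      = ∑ u ∈ Finset.range (n + 1), (b u + X ^ (2 * (n - u)) * b (u + 1)) * g2 R n u := by
  rw [Finset.sum_range_succ' (fun t => b t * g2 R (n + 1) t) (n + 1)]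
  have e1 : ∀ u ∈ Finset.range (n + 1), b (u + 1) * g2 R (n + 1) (u + 1)
      = X ^ (2 * (n - u)) * b (u + 1) * g2 R n u + (fun s => b s * g2 R n s) (u + 1) := by
    intro u hu
    rw [g2_pascalB (Finset.mem_range_succ_iff.mp hu)]
    ring
  rw [Finset.sum_congr rfl e1, Finset.sum_add_distrib,
    sum_shift (fun s => b s * g2 R n s)
      (by show b (n + 1) * g2 R n (n + 1) = 0
          rw [g2_eq_zero_of_lt (by omega)]; ring)]
  have e2 : ∀ u ∈ Finset.range (n + 1), (b u + X ^ (2 * (n - u)) * b (u + 1)) * g2 R n u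
      = X ^ (2 * (n - u)) * b (u + 1) * g2 R n u + b u * g2 R n u := by
    intro u _
    ring
  rw [Finset.sum_congr rfl e2, Finset.sum_add_distrib]
  simp only [g2_zero_right]
  ring

variable (R)

/-- partial theta-like sum -/
noncomputable def TT (N : ℕ) : PowerSeries R :=
  ∑ i ∈ Finset.range (2 * N + 1), (-1) ^ i * X ^ (eexp N i) * g2 R (2 * N) i

variable {R}

lemma TT_succ (N : ℕ) : TT R (N + 1) = -(1 - X ^ (2 * N + 1)) ^ 2 * TT R N := by
  have e0 : TT R (N + 1) = ∑ i ∈ Finset.range (2 * N + 1 + 1 + 1),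
      (fun i => (-1) ^ i * X ^ (eexp (N + 1) i) : ℕ → PowerSeries R) i * g2 R (2 * N + 1 + 1) i := by
    rw [TT, show 2 * (N + 1) = 2 * N + 1 + 1 by omega]
  have hchain := (e0.trans (step_A (2 * N + 1) (fun i => (-1) ^ i * X ^ (eexp (N + 1) i) : ℕ → PowerSeries R))).trans
    (step_B (2 * N) (fun s => (fun i => (-1) ^ i * X ^ (eexp (N + 1) i) : ℕ → PowerSeries R) (s + 1) + X ^ (2 * s) * (fun i => (-1) ^ i * X ^ (eexp (N + 1) i) : ℕ → PowerSeries R) s))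
  rw [hchain, TT, Finset.mul_sum]
  refine Finset.sum_congr rfl fun u hu => ?_
  have hu' : u ≤ 2 * N := Finset.mem_range_succ_iff.mp hu
  obtain ⟨v, hv⟩ : ∃ v, 2 * N = u + v := ⟨2 * N - u, by omega⟩
  have hv' : (u : ℤ) + v = 2 * (N : ℤ) := by exact_mod_cast hv.symm
  have hsub : 2 * N - u = v := by omega
  simp only [hsub]
  have n1 : 2 * u + eexp (N + 1) u = eexp N u + (2 * N + 1) := by
    have : ((2 * u + eexp (N + 1) u : ℕ) : ℤ) = ((eexp N u + (2 * N + 1) : ℕ) : ℤ) := by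
      push_cast [eexp_cast]
      ring
    exact_mod_cast this
  have n2 : eexp (N + 1) (u + 1) = eexp N u := by
    have : ((eexp (N + 1) (u + 1) : ℕ) : ℤ) = ((eexp N u : ℕ) : ℤ) := by
      push_cast [eexp_cast]
      ring
    exact_mod_cast this
  have n3 : 2 * v + eexp (N + 1) (u + 2) = eexp N u + (2 * N + 1) := by
    have : ((2 * v + eexp (N + 1) (u + 2) : ℕ) : ℤ) = ((eexp N u + (2 * N + 1) : ℕ) : ℤ) := by
      push_cast [eexp_cast]
      linear_combination 2 * hv'
    exact_mod_cast this
  have n4 : 2 * v + (2 * (u + 1) + eexp (N + 1) (u + 1)) = eexp N u + (2 * N + 1 + (2 * N + 1)) := by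
    have : ((2 * v + (2 * (u + 1) + eexp (N + 1) (u + 1)) : ℕ) : ℤ)
        = ((eexp N u + (2 * N + 1 + (2 * N + 1)) : ℕ) : ℤ) := by
      push_cast [eexp_cast]
      linear_combination 2 * hv'
    exact_mod_cast this
  have hX1 : (X : PowerSeries R) ^ (2 * u) * X ^ (eexp (N + 1) u)
      = X ^ (eexp N u) * X ^ (2 * N + 1) := by
    rw [← pow_add, ← pow_add, n1]
  have hX2 : (X : PowerSeries R) ^ (eexp (N + 1) (u + 1)) = X ^ (eexp N u) := by rw [n2]
  have hX3 : (X : PowerSeries R) ^ (2 * v) * X ^ (eexp (N + 1) (u + 2))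
      = X ^ (eexp N u) * X ^ (2 * N + 1) := by
    rw [← pow_add, ← pow_add, n3]
  have hX4 : (X : PowerSeries R) ^ (2 * v) * (X ^ (2 * (u + 1)) * X ^ (eexp (N + 1) (u + 1)))
      = X ^ (eexp N u) * (X ^ (2 * N + 1) * X ^ (2 * N + 1)) := by
    rw [← pow_add, ← pow_add, ← pow_add, ← pow_add, n4]
  linear_combination ((-1 : PowerSeries R) ^ u * g2 R (2 * N) u) * hX1
    + ((-1 : PowerSeries R) ^ u * g2 R (2 * N) u) * hX3
    - ((-1 : PowerSeries R) ^ u * g2 R (2 * N) u) * hX4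
    - ((-1 : PowerSeries R) ^ u * g2 R (2 * N) u) * hX2

end TTSection

section PoddSection

variable {R : Type*} [CommRing R]

lemma TT_zero : TT R 0 = 1 := by
  rw [TT]
  simp [eexp, g2_zero_right]

variable (R)

/-- `∏_{k=1}^{N} (1 - X^{2k-1})^2` -/
noncomputable def Podd (N : ℕ) : PowerSeries R :=
  ∏ k ∈ Finset.Ioc 0 N, (1 - X ^ (2 * k - 1)) ^ 2

variable {R}

lemma Podd_eq_TT (N : ℕ) : Podd R N = (-1) ^ N * TT R N := by
  induction N with
  | zero => simp [Podd, TT_zero]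
  | succ N ih =>
    rw [Podd, Finset.prod_Ioc_succ_top (Nat.zero_le N), ← Podd, ih, TT_succ,
      show 2 * (N + 1) - 1 = 2 * N + 1 by omega]
    ring

/-- Cancellation against a constant-coefficient-one factor. -/
lemma cancel_cc1 {f g h : PowerSeries R} (hf : constantCoeff (R := R) f = 1) (h1 : f * g = f * h) :
    g = h := by
  have h2 := congrArg (fun x => inv1 f * x) h1
  simp only [← mul_assoc] at h2
  rw [mul_comm (inv1 f) f, mul_inv1 hf, one_mul, one_mul] at h2
  exact h2

lemma g2_Qp_aux {G : PowerSeries R} {a b Np : ℕ} (hG : G * (Qp a * Qp b) = Qp (2 * Np))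
    (ha : a ≤ Np) (hb : Np ≤ b) (hb2 : b ≤ 2 * Np) :
    LowEq (2 * a + 2) (G * Qp Np) 1 := by
  set Pb : PowerSeries R := ∏ m ∈ Finset.Ioc Np b, (1 - X ^ (2 * m)) with hPb
  set Pa : PowerSeries R := ∏ m ∈ Finset.Ioc a (2 * Np), (1 - X ^ (2 * m)) with hPa
  have hQb : Qp (R := R) b = Qp Np * Pb := by
    rw [Qp, Qp, hPb, Finset.prod_Ioc_consecutive _ (Nat.zero_le Np) hb]
  have hQ2 : Qp (R := R) (2 * Np) = Qp a * Pa := by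
    rw [Qp, Qp, hPa, Finset.prod_Ioc_consecutive _ (Nat.zero_le a) (by omega)]
  have key : Qp a * (G * Qp Np * Pb) = Qp a * Pa := by
    rw [← hQ2, ← hG, hQb]
    ring
  have key2 : G * Qp Np * Pb = Pa := cancel_cc1 (cc_Qp a) key
  have ccPb : constantCoeff (R := R) Pb = 1 :=
    cc_prod fun m hm => cc_one_sub_X_pow (by have := (Finset.mem_Ioc.mp hm).1; omega)
  have key3 : G * Qp Np = Pa * inv1 Pb := by
    calc G * Qp Np = G * Qp Np * (Pb * inv1 Pb) := by rw [mul_inv1 ccPb, mul_one]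
    _ = (G * Qp Np * Pb) * inv1 Pb := by ring
    _ = Pa * inv1 Pb := by rw [key2]
  have hPa1 : LowEq (2 * a + 2) Pa 1 := by
    refine LowEq.prod_one fun m hm => lowEq_one_sub_X_pow ?_
    have := (Finset.mem_Ioc.mp hm).1
    omega
  have hPb1 : LowEq (2 * a + 2) Pb 1 := by
    refine LowEq.prod_one fun m hm => lowEq_one_sub_X_pow ?_
    have := (Finset.mem_Ioc.mp hm).1
    omega
  have hiPb : LowEq (2 * a + 2) (inv1 Pb) 1 := lowEq_inv_one (mul_inv1 ccPb) hPb1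
  rw [key3]
  have := hPa1.mul hiPb
  rwa [one_mul] at this

lemma g2_Qp_lowEq {Np i : ℕ} (hi : i ≤ 2 * Np) :
    LowEq (2 * (min i (2 * Np - i)) + 2) (g2 R (2 * Np) i * Qp Np) 1 := by
  have hId := g2_mul_Qp (R := R) (n := 2 * Np) (k := i) hi
  rcases le_total i (2 * Np - i) with h | h
  · have hmin : min i (2 * Np - i) = i := by omega
    rw [hmin]
    refine g2_Qp_aux (a := i) (b := 2 * Np - i) ?_ (by omega) (by omega) (by omega)
    rw [← hId]; ring
  · have hmin : min i (2 * Np - i) = 2 * Np - i := by omega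
    rw [hmin]
    refine g2_Qp_aux (a := 2 * Np - i) (b := i) ?_ (by omega) (by omega) (by omega)
    rw [← hId]; ring

lemma coeff_neg_one_pow_mul {c i : ℕ} {Z : PowerSeries R} (h : coeff (R := R) i Z = 0) :
    coeff (R := R) i ((-1) ^ c * Z) = 0 := by
  rcases Nat.even_or_odd c with hc | hc
  · rw [hc.neg_one_pow, one_mul, h]
  · rw [hc.neg_one_pow, neg_one_mul, map_neg, h, neg_zero]

lemma crux_core {p i : ℕ} (hp : p % 4 = 3) (hi : i ≤ 2 * p) :
    coeff (R := R) p (X ^ (eexp p i) * (g2 R (2 * p) i * Qp p)) = 0 := by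
  rw [coeff_X_pow_mul']
  split_ifs with he
  · obtain ⟨m, he2, hmin⟩ : ∃ m, eexp p i = m ^ 2 ∧ min i (2 * p - i) = p - m := by
      rcases le_or_gt i p with hip | hip
      · refine ⟨p - i, ?_, by omega⟩
        rw [eexp]
        have h1 : (p : ℤ) - i = ((p - i : ℕ) : ℤ) := by omega
        rw [h1, ← Nat.cast_pow, Int.toNat_natCast]
      · refine ⟨i - p, ?_, by omega⟩
        rw [eexp]
        have h1 : (p : ℤ) - i = -(((i - p : ℕ) : ℤ)) := by omega
        rw [h1, neg_sq, ← Nat.cast_pow, Int.toNat_natCast]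
    have hm2 : 2 * m ≤ m ^ 2 + 1 := by nlinarith [sq_nonneg ((m : ℤ) - 1), sq_nonneg (m : ℤ)]
    have hne : eexp p i ≠ p := by
      rw [he2]
      rcases Nat.even_or_odd m with ⟨t, ht⟩ | ⟨t, ht⟩
      · rw [ht]
        intro hcon
        have : (t + t) ^ 2 = 4 * t ^ 2 := by ring
        omega
      · rw [ht]
        intro hcon
        have : (2 * t + 1) ^ 2 = 4 * (t ^ 2 + t) + 1 := by ring
        omega
    have key := g2_Qp_lowEq (R := R) (Np := p) (i := i) hi
    rw [hmin] at key
    have hlt : p - eexp p i < 2 * (p - m) + 2 := by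
      have hee : 2 * m ≤ eexp p i + 1 := by omega
      omega
    rw [key (p - eexp p i) hlt, coeff_one, if_neg (by omega)]
  · rfl

lemma crux {B p : ℕ} (hp : p % 4 = 3) (hpB : p ≤ B) :
    coeff (R := R) p (Podd R B * Qp B) = 0 := by
  have hP : LowEq (p + 1) (Podd R B) (Podd R p) := by
    refine LowEq.prod_subset (Finset.Ioc_subset_Ioc le_rfl hpB) fun k hk hknot => ?_
    have hk1 := Finset.mem_Ioc.mp hk
    have hk2 : ¬ (0 < k ∧ k ≤ p) := fun hcon => hknot (Finset.mem_Ioc.mpr hcon)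
    exact (lowEq_one_sub_X_pow (by omega)).pow_one 2
  have hQ : LowEq (p + 1) (Qp (R := R) B) (Qp p) := by
    refine LowEq.prod_subset (Finset.Ioc_subset_Ioc le_rfl hpB) fun k hk hknot => ?_
    have hk1 := Finset.mem_Ioc.mp hk
    have hk2 : ¬ (0 < k ∧ k ≤ p) := fun hcon => hknot (Finset.mem_Ioc.mpr hcon)
    exact lowEq_one_sub_X_pow (by omega)
  rw [(hP.mul hQ) p (by omega)]
  rw [Podd_eq_TT, TT, mul_assoc, Finset.sum_mul, Finset.mul_sum, map_sum]
  refine Finset.sum_eq_zero fun i hi => ?_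
  have hi2 : i ≤ 2 * p := by
    have := Finset.mem_range.mp hi
    omega
  have harr : (-1 : PowerSeries R) ^ p * ((-1) ^ i * X ^ (eexp p i) * g2 R (2 * p) i * Qp p)
      = (-1) ^ p * ((-1) ^ i * (X ^ (eexp p i) * (g2 R (2 * p) i * Qp p))) := by ring
  rw [harr]
  exact coeff_neg_one_pow_mul (coeff_neg_one_pow_mul (crux_core hp hi2))

end PoddSection

section PowLemmas

variable {S : Type*} [CommRing S]

lemma pow8_eq (h16 : (16 : S) = 0) (y c : S) : (y + 2 * c) ^ 8 = y ^ 8 := by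
  have h : (y + 2 * c) ^ 8 = y ^ 8 + 16 * (y^7*c + 7*y^6*c^2 + 28*y^5*c^3 + 70*y^4*c^4
      + 112*y^3*c^5 + 112*y^2*c^6 + 64*y*c^7 + 16*c^8) := by ring
  rw [h, h16, zero_mul, add_zero]

lemma pow4_eq (y c : S) :
    (y + 2 * c) ^ 4 = y ^ 4 + 8 * (y^3*c + 3*y^2*c^2 + 4*y*c^3 + 2*c^4) := by ring

lemma onesub8pow (h64 : (64 : S) = 0) (v : S) (t : ℕ) :
    (1 - 8 * v) ^ t = 1 - (t : S) * (8 * v) := by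
  induction t with
  | zero => simp
  | succ t ih =>
    rw [pow_succ, ih]
    push_cast
    linear_combination (t : S) * v ^ 2 * h64

end PowLemmas

section SuppExtra

variable {R : Type*} [CommRing R]

lemma Supp.nat_mul {c : ℕ} (a : ℕ) {f : PowerSeries R} (hf : Supp c f) :
    Supp c (((a : ℕ) : PowerSeries R) * f) := by
  intro i hi
  rw [show ((a : ℕ) : PowerSeries R) = C (R := R) ((a : ℕ) : R) from (map_natCast (C (R := R)) a).symm,
    coeff_C_mul, hf i hi, mul_zero]

end SuppExtra

section SplitSection

variable {R : Type*} [CommRing R]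

lemma E1sq_split (N : ℕ) :
    LowEq (N + 1) ((∏ m ∈ Finset.Ioc 0 N, ((1 : PowerSeries R) - X ^ m)) ^ 2)
      (Podd R N * (Qp N * Qp N)) := by
  classical
  have hps : (∏ m ∈ Finset.Ioc 0 N, ((1 : PowerSeries R) - X ^ m)) ^ 2
      = ∏ m ∈ Finset.Ioc 0 N, ((1 : PowerSeries R) - X ^ m) ^ 2 := (Finset.prod_pow _ _ _).symm
  have hfil := Finset.prod_filter_mul_prod_filter_not (Finset.Ioc 0 N) (fun m => m % 2 = 1)
    (fun m => ((1 : PowerSeries R) - X ^ m) ^ 2)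
  have hodd : (∏ m ∈ Finset.Ioc 0 N with m % 2 = 1, ((1 : PowerSeries R) - X ^ m) ^ 2)
      = ∏ kk ∈ Finset.Ioc 0 ((N + 1) / 2), ((1 : PowerSeries R) - X ^ (2 * kk - 1)) ^ 2 := by
    refine Finset.prod_nbij' (fun m => (m + 1) / 2) (fun kk => 2 * kk - 1) ?_ ?_ ?_ ?_ ?_
    · intro a ha
      simp only [Finset.mem_filter, Finset.mem_Ioc] at ha ⊢
      omega
    · intro a ha
      simp only [Finset.mem_filter, Finset.mem_Ioc] at ha ⊢
      omega
    · intro a ha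
      simp only [Finset.mem_filter, Finset.mem_Ioc] at ha
      omega
    · intro a ha
      simp only [Finset.mem_Ioc] at ha
      omega
    · intro a ha
      simp only [Finset.mem_filter, Finset.mem_Ioc] at ha
      have : 2 * ((a + 1) / 2) - 1 = a := by omega
      rw [this]
  have heven : (∏ m ∈ Finset.Ioc 0 N with ¬ m % 2 = 1, ((1 : PowerSeries R) - X ^ m) ^ 2)
      = ∏ kk ∈ Finset.Ioc 0 (N / 2), ((1 : PowerSeries R) - X ^ (2 * kk)) ^ 2 := by
    refine Finset.prod_nbij' (fun m => m / 2) (fun kk => 2 * kk) ?_ ?_ ?_ ?_ ?_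
    · intro a ha
      simp only [Finset.mem_filter, Finset.mem_Ioc] at ha ⊢
      omega
    · intro a ha
      simp only [Finset.mem_filter, Finset.mem_Ioc] at ha ⊢
      omega
    · intro a ha
      simp only [Finset.mem_filter, Finset.mem_Ioc] at ha
      omega
    · intro a ha
      simp only [Finset.mem_Ioc] at ha
      omega
    · intro a ha
      simp only [Finset.mem_filter, Finset.mem_Ioc] at ha
      have : 2 * (a / 2) = a := by omega
      rw [this]
  have hPodd : LowEq (N + 1) (Podd R N) (Podd R ((N + 1) / 2)) := by
    refine LowEq.prod_subset (Finset.Ioc_subset_Ioc le_rfl (by omega)) fun kk hk hknot => ?_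
    have hk1 := Finset.mem_Ioc.mp hk
    have hk2 : ¬ (0 < kk ∧ kk ≤ (N + 1) / 2) := fun hcon => hknot (Finset.mem_Ioc.mpr hcon)
    exact (lowEq_one_sub_X_pow (by omega)).pow_one 2
  have hQp2 : Qp (R := R) N * Qp N = ∏ kk ∈ Finset.Ioc 0 N, ((1 : PowerSeries R) - X ^ (2 * kk)) ^ 2 := by
    rw [show Qp (R := R) N = ∏ m ∈ Finset.Ioc 0 N, ((1 : PowerSeries R) - X ^ (2 * m)) from rfl,
      ← Finset.prod_mul_distrib]
    refine Finset.prod_congr rfl fun kk _ => ?_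
    ring
  have hQeven : LowEq (N + 1) (∏ kk ∈ Finset.Ioc 0 N, ((1 : PowerSeries R) - X ^ (2 * kk)) ^ 2)
      (∏ kk ∈ Finset.Ioc 0 (N / 2), ((1 : PowerSeries R) - X ^ (2 * kk)) ^ 2) := by
    refine LowEq.prod_subset (Finset.Ioc_subset_Ioc le_rfl (by omega)) fun kk hk hknot => ?_
    have hk1 := Finset.mem_Ioc.mp hk
    have hk2 : ¬ (0 < kk ∧ kk ≤ N / 2) := fun hcon => hknot (Finset.mem_Ioc.mpr hcon)
    exact (lowEq_one_sub_X_pow (by omega)).pow_one 2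
  have hchain : LowEq (N + 1) (Podd R N * (Qp N * Qp N))
      ((∏ m ∈ Finset.Ioc 0 N, ((1 : PowerSeries R) - X ^ m)) ^ 2) := by
    have h1 : LowEq (N + 1) (Podd R N * (Qp N * Qp N))
        (Podd R ((N + 1) / 2) * ∏ kk ∈ Finset.Ioc 0 (N / 2), ((1 : PowerSeries R) - X ^ (2 * kk)) ^ 2) := by
      rw [hQp2]
      exact hPodd.mul hQeven
    have h2 : Podd R ((N + 1) / 2) * ∏ kk ∈ Finset.Ioc 0 (N / 2), ((1 : PowerSeries R) - X ^ (2 * kk)) ^ 2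
        = (∏ m ∈ Finset.Ioc 0 N, ((1 : PowerSeries R) - X ^ m)) ^ 2 := by
      rw [Podd, ← hodd, ← heven, hps, hfil]
    intro i hi
    rw [h1 i hi, h2]
  exact hchain.symm

end SplitSection

section Core16

local notation "S16" => PowerSeries (ZMod 16)

lemma h16S : (16 : S16) = 0 := by
  rw [← map_ofNat (C (R := ZMod 16)) 16, show (16 : ZMod 16) = 0 by decide, map_zero]

lemma h64S : (64 : S16) = 0 := by
  rw [← map_ofNat (C (R := ZMod 16)) 64, show (64 : ZMod 16) = 0 by decide, map_zero]

set_option maxHeartbeats 1000000 in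
lemma core16 (j n : ℕ) :
    coeff (R := ZMod 16) (4 * n + 3)
      ((∏ m ∈ Finset.Ioc 0 (4 * n + 3), (1 - X ^ (2 * m))) ^ (16 * j + 15)
        * (inv1 (∏ m ∈ Finset.Ioc 0 (4 * n + 3), (1 - X ^ m))) ^ (3 * (16 * j + 15) + 1)) = 0 := by
  set N := 4 * n + 3 with hN
  set k := 16 * j + 15 with hk
  set s := j + 1 with hs
  set E1 : S16 := ∏ m ∈ Finset.Ioc 0 N, (1 - X ^ m) with hE1
  set Q4 : S16 := ∏ m ∈ Finset.Ioc 0 N, (1 - X ^ (4 * m)) with hQ4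
  have ccE1 : constantCoeff (R := ZMod 16) E1 = 1 :=
    cc_prod fun m hm => cc_one_sub_X_pow (by have := (Finset.mem_Ioc.mp hm).1; omega)
  have ccE2 : constantCoeff (R := ZMod 16) (Qp N) = 1 := cc_Qp N
  have ccQ4 : constantCoeff (R := ZMod 16) Q4 = 1 :=
    cc_prod fun m hm => cc_one_sub_X_pow (by have := (Finset.mem_Ioc.mp hm).1; omega)
  have hi1 : E1 * inv1 E1 = 1 := mul_inv1 ccE1
  have hi2 : Qp (R := ZMod 16) N * inv1 (Qp N) = 1 := mul_inv1 ccE2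
  have hi4 : Q4 * inv1 Q4 = 1 := mul_inv1 ccQ4
  set i1 : S16 := inv1 E1
  set i2 : S16 := inv1 (Qp N)
  set i4 : S16 := inv1 Q4
  have suppQ4 : Supp 4 Q4 :=
    Supp.prod fun m _ => supp_one_sub_X_pow ⟨m, rfl⟩
  have suppi4 : Supp 4 i4 := Supp.inv hi4 ccQ4 suppQ4
  -- A : E1^2 = Qp N + 2 A
  obtain ⟨A, hA⟩ : ∃ A, E1 ^ 2 = Qp N + 2 * A := by
    have h := prod_cong2 (s := Finset.Ioc 0 N) (f := fun m => ((1 : S16) - X ^ m) ^ 2)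
      (g := fun m => 1 - X ^ (2 * m)) (fun m _ => ⟨X ^ (2 * m) - X ^ m, by
        rw [show 2 * m = m + m by ring, pow_add]; ring⟩)
    obtain ⟨b, hb⟩ := h
    refine ⟨b, ?_⟩
    rw [hE1, ← Finset.prod_pow]
    exact hb
  -- B : (Qp N)^2 = Q4 + 2 B with B supported on evens
  obtain ⟨B, hBsupp, hB⟩ : ∃ B, Supp 2 B ∧ Qp (R := ZMod 16) N ^ 2 = Q4 + 2 * B := by
    have h := prod_cong2_supp (c := 2) (s := Finset.Ioc 0 N)
      (f := fun m => ((1 : S16) - X ^ (2 * m)) ^ 2) (g := fun m => 1 - X ^ (4 * m))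
      (fun m _ => supp_one_sub_X_pow ⟨2 * m, by ring⟩)
      (fun m _ => ⟨X ^ (4 * m) - X ^ (2 * m), supp_X_pow_sub ⟨2 * m, by ring⟩ ⟨m, rfl⟩, by
        rw [show 4 * m = 2 * m + 2 * m by ring, pow_add]; ring⟩)
    obtain ⟨b, hbs, hb⟩ := h
    refine ⟨b, hbs, ?_⟩
    have hQp : Qp (R := ZMod 16) N = ∏ m ∈ Finset.Ioc 0 N, (1 - X ^ (2 * m)) := rfl
    rw [hQp, ← Finset.prod_pow]
    exact hb
  have h2_16 : Qp (R := ZMod 16) N ^ 16 = Q4 ^ 8 := by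
    rw [show Qp (R := ZMod 16) N ^ 16 = (Qp N ^ 2) ^ 8 by ring, hB, pow8_eq h16S]
  have h1_16 : E1 ^ 16 = Qp (R := ZMod 16) N ^ 8 := by
    rw [show E1 ^ 16 = (E1 ^ 2) ^ 8 by ring, hA, pow8_eq h16S]
  set U : S16 := Q4^3*B + 3*Q4^2*B^2 + 4*(Q4*B^3) + 2*B^4 with hU
  have hU8 : Qp (R := ZMod 16) N ^ 8 = Q4 ^ 4 + 8 * U := by
    rw [show Qp (R := ZMod 16) N ^ 8 = (Qp N ^ 2) ^ 4 by ring, hB, pow4_eq, hU]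
    ring
  have suppB2 : Supp 2 B := hBsupp
  have suppQ42 : Supp 2 Q4 := suppQ4.of_dvd ⟨2, rfl⟩
  have suppU : Supp 2 U := by
    have s1 : Supp 2 (Q4^3*B : S16) := (suppQ42.pow 3).mul suppB2
    have s2 : Supp 2 (3*Q4^2*B^2 : S16) := by
      have : (3 : S16) * Q4^2 * B^2 = ((3 : ℕ) : S16) * (Q4^2 * B^2) := by push_cast; ring
      rw [this]
      exact Supp.nat_mul 3 ((suppQ42.pow 2).mul (suppB2.pow 2))
    have s3 : Supp 2 (4*(Q4*B^3) : S16) := by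
      have : (4 : S16) * (Q4*B^3) = ((4 : ℕ) : S16) * (Q4 * B^3) := by push_cast; ring
      rw [this]
      exact Supp.nat_mul 4 (suppQ42.mul (suppB2.pow 3))
    have s4 : Supp 2 (2*B^4 : S16) := by
      have : (2 : S16) * B^4 = ((2 : ℕ) : S16) * B^4 := by push_cast; ring
      rw [this]
      exact Supp.nat_mul 2 (suppB2.pow 4)
    exact ((s1.add s2).add s3).add s4
  set V : S16 := U * i4^4 with hV
  have suppV : Supp 2 V := suppU.mul ((suppi4.of_dvd ⟨2, rfl⟩).pow 4)
  clear_value N k s E1 Q4 i1 i2 i4 U V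
  have h44 : Q4 ^ 4 * i4 ^ 4 = 1 := by rw [← mul_pow, hi4, one_pow]
  have hi28 : Qp (R := ZMod 16) N ^ 8 * i2 ^ 8 = 1 := by rw [← mul_pow, hi2, one_pow]
  have hinv8 : i2 ^ 8 = i4 ^ 4 * (1 - 8 * V) := by
    refine inv_unique' hi28 ?_
    rw [hU8, hV]
    linear_combination (1 - 8*U*i4^4) * h44 - U^2*i4^8 * h64S
  have hi116 : E1 ^ 16 * i1 ^ 16 = 1 := by rw [← mul_pow, hi1, one_pow]
  have hi1_16 : i1 ^ 16 = i2 ^ 8 := by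
    refine inv_unique' hi116 ?_
    rw [h1_16]
    exact hi28
  -- main algebraic identity
  have main_eq : Qp (R := ZMod 16) N ^ k * i1 ^ (3 * k + 1)
      = (E1^2 * i2) * i4^(4*s) - ((8*s : ℕ) : S16) * ((E1^2 * i2) * (i4^(4*s) * V)) := by
    have hx : Qp (R := ZMod 16) N ^ k * i1 ^ (3 * k + 1)
        = (Qp N ^ k * Qp N * i2) * ((i1 ^ (3*k+1) * i1^2) * E1^2) := by
      have h2' : i1 * E1 = 1 := by rw [mul_comm]; exact hi1
      calc Qp (R := ZMod 16) N ^ k * i1 ^ (3 * k + 1)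
          = (Qp N ^ k * i1 ^ (3*k+1)) * ((Qp N * i2) * ((i1*E1) * (i1*E1))) := by
            rw [hi2, h2', one_mul, mul_one, mul_one]
        _ = (Qp N ^ k * Qp N * i2) * ((i1 ^ (3*k+1) * i1^2) * E1^2) := by ring
    rw [hx, ← pow_succ, show k + 1 = 16 * s by omega, ← pow_add, show 3*k+1+2 = 48 * s by omega]
    rw [show (16 : ℕ) * s = 16 * s by rfl]
    have e1 : Qp (R := ZMod 16) N ^ (16 * s) = Q4 ^ (8 * s) := by
      rw [show 16 * s = 16 * s by rfl, pow_mul, h2_16, ← pow_mul]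
    have e2 : i1 ^ (48 * s) = i4 ^ (12 * s) * (1 - ((3*s : ℕ) : S16) * (8 * V)) := by
      rw [show 48 * s = 16 * (3 * s) by ring, pow_mul, hi1_16, hinv8, mul_pow, ← pow_mul,
        show 4 * (3 * s) = 12 * s by ring, onesub8pow h64S]
    rw [e1, e2]
    have e3 : Q4 ^ (8*s) * i4 ^ (12*s) = i4 ^ (4*s) := by
      have h88 : Q4 ^ (8*s) * i4 ^ (8*s) = 1 := by rw [← mul_pow, hi4, one_pow]
      calc Q4 ^ (8*s) * i4 ^ (12*s) = (Q4^(8*s) * i4^(8*s)) * i4^(4*s) := by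
            rw [show 12*s = 8*s+4*s by ring, pow_add]; ring
        _ = i4 ^ (4*s) := by rw [h88, one_mul]
    have e4 : ((3*s : ℕ) : S16) * (8 * V) = ((8*s : ℕ) : S16) * V := by
      have hc : ((3*s : ℕ) : S16) * 8 = ((8*s : ℕ) : S16) + ((s : ℕ) : S16) * 16 := by
        push_cast; ring
      calc ((3*s : ℕ) : S16) * (8 * V) = (((3*s : ℕ) : S16) * 8) * V := by ring
        _ = (((8*s : ℕ) : S16) + ((s : ℕ) : S16) * 16) * V := by rw [hc]
        _ = ((8*s : ℕ) : S16) * V + ((s : ℕ) : S16) * V * 16 := by ring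
        _ = ((8*s : ℕ) : S16) * V := by rw [h16S]; ring
    calc Q4 ^ (8*s) * i2 * (i4 ^ (12*s) * (1 - ((3*s : ℕ) : S16) * (8 * V)) * E1^2)
        = (Q4 ^ (8*s) * i4 ^ (12*s)) * i2 * ((1 - ((3*s : ℕ) : S16) * (8 * V)) * E1^2) := by ring
      _ = i4 ^ (4*s) * i2 * ((1 - ((8*s : ℕ) : S16) * V) * E1^2) := by rw [e3, e4]
      _ = (E1^2 * i2) * i4^(4*s) - ((8*s : ℕ) : S16) * ((E1^2 * i2) * (i4^(4*s) * V)) := by ring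
  -- reduction of E1^2 against the odd/even split, below degree N+1
  have hsplit : LowEq (N + 1) (E1 ^ 2) (Podd (ZMod 16) N * (Qp N * Qp N)) := by
    rw [hE1]
    exact E1sq_split N
  -- term 1 vanishes
  have term1 : coeff (R := ZMod 16) N ((E1^2 * i2) * i4^(4*s)) = 0 := by
    have hlow : LowEq (N + 1) ((E1^2 * i2) * i4^(4*s))
        ((Podd (ZMod 16) N * Qp N) * i4^(4*s)) := by
      have h1 := (hsplit.mul (LowEq.refl (i2 * i4^(4*s))))
      have h2 : Podd (ZMod 16) N * (Qp N * Qp N) * (i2 * i4^(4*s))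
          = (Podd (ZMod 16) N * Qp N) * i4^(4*s) := by
        calc Podd (ZMod 16) N * (Qp N * Qp N) * (i2 * i4^(4*s))
            = (Podd (ZMod 16) N * Qp N) * i4^(4*s) * (Qp N * i2) := by ring
          _ = _ := by rw [hi2, mul_one]
      intro i hi
      have := h1 i hi
      rw [h2] at this
      rw [← this]
      congr 1
      ring
    rw [hlow N (by omega)]
    rw [coeff_mul]
    refine Finset.sum_eq_zero fun p hp => ?_
    have hpq := Finset.HasAntidiagonal.mem_antidiagonal.mp hp
    by_cases h4 : (4 : ℕ) ∣ p.2
    · have hp1 : p.1 % 4 = 3 := by omega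
      rw [crux hp1 (by omega), zero_mul]
    · rw [(suppi4.pow (4*s)) p.2 h4, mul_zero]
  -- term 2 is even
  obtain ⟨c2, hc2⟩ : ∃ c2, coeff (R := ZMod 16) N ((E1^2 * i2) * (i4^(4*s) * V)) = 2 * c2 := by
    have hrw : (E1^2 * i2) * (i4^(4*s) * V)
        = (i4^(4*s) * V) + 2 * (A * i2 * (i4^(4*s) * V)) := by
      calc (E1^2 * i2) * (i4^(4*s) * V)
          = (Qp N * i2) * (i4^(4*s) * V) + 2 * (A * i2 * (i4^(4*s) * V)) := by rw [hA]; ring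
        _ = _ := by rw [hi2, one_mul]
    rw [hrw, map_add]
    have hZ : coeff (R := ZMod 16) N (i4^(4*s) * V) = 0 := by
      refine (((suppi4.of_dvd ⟨2, rfl⟩).pow (4*s)).mul suppV) N ?_
      omega
    rw [hZ, zero_add]
    refine ⟨coeff (R := ZMod 16) N (A * i2 * (i4^(4*s) * V)), ?_⟩
    rw [show (2 : S16) = C (R := ZMod 16) 2 from (map_ofNat (C (R := ZMod 16)) 2).symm, coeff_C_mul]
  -- combine
  show coeff (R := ZMod 16) N (Qp N ^ k * i1 ^ (3 * k + 1)) = 0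
  rw [main_eq, map_sub]
  rw [show ((8*s : ℕ) : S16) = C (R := ZMod 16) ((8*s : ℕ) : ZMod 16) from (map_natCast _ _).symm,
    coeff_C_mul, term1, hc2]
  have : ((8*s : ℕ) : ZMod 16) * (2 * c2) = 0 := by
    have h2 : ((8*s : ℕ) : ZMod 16) * 2 = ((16*s : ℕ) : ZMod 16) := by push_cast; ring
    rw [← mul_assoc, h2, show ((16*s : ℕ) : ZMod 16) = 0 by
      push_cast
      rw [show (16 : ZMod 16) = 0 by decide, zero_mul]]
    ring
  rw [this]
  ring

end Core16

/-- `ElongatedDiamondGF d` says that for every `k ≥ 1`, the sequence `d k` satisfies the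
formal power series identity `∑_{n≥0} d_k(n) q^n = ∏_{m≥1} (1 − q^{2m})^k / ∏_{m≥1} (1 − q^m)^{3k+1}`
in `ℤ[[q]]`, i.e. `(∑_{n≥0} d_k(n) q^n) · ∏_{m≥1} (1 − q^m)^{3k+1} = ∏_{m≥1} (1 − q^{2m})^k`.
Since the factors with `m > n` do not affect the coefficient of `q^n`, this infinite-product
identity is encoded coefficient-wise via the truncated (finite) products over `1 ≤ m ≤ n`.
Combinatorially, `d k n` counts the partitions obtained by adding the links of the
`k`-elongated plane partition diamonds of length `n`. -/
def ElongatedDiamondGF (d : ℕ → ℕ → ℤ) : Prop :=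
  ∀ k : ℕ, 1 ≤ k → ∀ n : ℕ,
    (PowerSeries.coeff (R := ℤ) n)
        ((PowerSeries.mk fun i => d k i) *
          ∏ m ∈ Finset.Icc 1 n, (1 - PowerSeries.X ^ m) ^ (3 * k + 1)) =
      (PowerSeries.coeff (R := ℤ) n) (∏ m ∈ Finset.Icc 1 n, (1 - PowerSeries.X ^ (2 * m)) ^ k)

set_option maxHeartbeats 1000000 in
theorem stmt_12 (d : ℕ → ℕ → ℤ) (hd : ElongatedDiamondGF d) :
    ∀ n j : ℕ, (16 : ℤ) ∣ d (16 * j + 15) (4 * n + 3) := by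
  intro n j
  set k := 16 * j + 15 with hk
  set N := 4 * n + 3 with hN
  have hd' := hd k (by omega)
  set D : PowerSeries ℤ := PowerSeries.mk fun i => d k i with hD
  -- Step 1: lift the bound in the products to the common bound N.
  have step1 : ∀ n' : ℕ, n' ≤ N →
      coeff (R := ℤ) n' (D * ∏ m ∈ Finset.Icc 1 N, (1 - X ^ m) ^ (3 * k + 1))
        = coeff (R := ℤ) n' (∏ m ∈ Finset.Icc 1 N, (1 - X ^ (2 * m)) ^ k) := by
    intro n' hn'
    have hP : LowEq (n' + 1) (∏ m ∈ Finset.Icc 1 N, ((1 : PowerSeries ℤ) - X ^ m) ^ (3 * k + 1))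
        (∏ m ∈ Finset.Icc 1 n', ((1 : PowerSeries ℤ) - X ^ m) ^ (3 * k + 1)) := by
      refine LowEq.prod_subset (Finset.Icc_subset_Icc le_rfl hn') fun m hm hmn => ?_
      have hm1 := Finset.mem_Icc.mp hm
      have hm2 : ¬ (1 ≤ m ∧ m ≤ n') := fun hcon => hmn (Finset.mem_Icc.mpr hcon)
      exact (lowEq_one_sub_X_pow (by omega)).pow_one _
    have hQ : LowEq (n' + 1) (∏ m ∈ Finset.Icc 1 N, ((1 : PowerSeries ℤ) - X ^ (2 * m)) ^ k)
        (∏ m ∈ Finset.Icc 1 n', ((1 : PowerSeries ℤ) - X ^ (2 * m)) ^ k) := by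
      refine LowEq.prod_subset (Finset.Icc_subset_Icc le_rfl hn') fun m hm hmn => ?_
      have hm1 := Finset.mem_Icc.mp hm
      have hm2 : ¬ (1 ≤ m ∧ m ≤ n') := fun hcon => hmn (Finset.mem_Icc.mpr hcon)
      exact (lowEq_one_sub_X_pow (by omega)).pow_one _
    have e1 := ((LowEq.refl D).mul hP) n' (by omega)
    have e2 := hQ n' (by omega)
    exact e1.trans ((hd' n').trans e2.symm)
  -- Step 2: map everything to ZMod 16.
  have step2 : ∀ n' : ℕ, n' ≤ N →
      coeff (R := ZMod 16) n' ((PowerSeries.map (Int.castRingHom (ZMod 16)) D)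
          * ∏ m ∈ Finset.Icc 1 N, (1 - X ^ m) ^ (3 * k + 1))
        = coeff (R := ZMod 16) n' (∏ m ∈ Finset.Icc 1 N, (1 - X ^ (2 * m)) ^ k) := by
    intro n' hn'
    have h := congrArg (Int.castRingHom (ZMod 16)) (step1 n' hn')
    rw [← PowerSeries.coeff_map, ← PowerSeries.coeff_map] at h
    have hmapP : PowerSeries.map (Int.castRingHom (ZMod 16))
        (D * ∏ m ∈ Finset.Icc 1 N, ((1 : PowerSeries ℤ) - X ^ m) ^ (3 * k + 1))
        = (PowerSeries.map (Int.castRingHom (ZMod 16)) D)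
          * ∏ m ∈ Finset.Icc 1 N, ((1 : PowerSeries (ZMod 16)) - X ^ m) ^ (3 * k + 1) := by
      rw [map_mul, map_prod]
      congr 1
      refine Finset.prod_congr rfl fun m _ => ?_
      rw [map_pow, map_sub, map_one, map_pow, PowerSeries.map_X]
    have hmapQ : PowerSeries.map (Int.castRingHom (ZMod 16))
        (∏ m ∈ Finset.Icc 1 N, ((1 : PowerSeries ℤ) - X ^ (2 * m)) ^ k)
        = ∏ m ∈ Finset.Icc 1 N, ((1 : PowerSeries (ZMod 16)) - X ^ (2 * m)) ^ k := by
      rw [map_prod]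
      refine Finset.prod_congr rfl fun m _ => ?_
      rw [map_pow, map_sub, map_one, map_pow, PowerSeries.map_X]
    rw [hmapP, hmapQ] at h
    exact h
  -- Step 3: pass to the inverse of the truncated eta-power.
  have hIcc : Finset.Icc 1 N = Finset.Ioc 0 N := by
    ext x
    simp only [Finset.mem_Icc, Finset.mem_Ioc]
    omega
  have ccP' : constantCoeff (R := ZMod 16)
      (∏ m ∈ Finset.Icc 1 N, ((1 : PowerSeries (ZMod 16)) - X ^ m) ^ (3 * k + 1)) = 1 := by
    refine cc_prod fun m hm => ?_
    have hm1 := (Finset.mem_Icc.mp hm).1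
    rw [map_pow, cc_one_sub_X_pow (by omega), one_pow]
  have hL2 : LowEq (N + 1)
      ((PowerSeries.map (Int.castRingHom (ZMod 16)) D)
        * ∏ m ∈ Finset.Icc 1 N, ((1 : PowerSeries (ZMod 16)) - X ^ m) ^ (3 * k + 1))
      (∏ m ∈ Finset.Icc 1 N, ((1 : PowerSeries (ZMod 16)) - X ^ (2 * m)) ^ k) :=
    fun i hi => step2 i (by omega)
  have hfinal : coeff (R := ZMod 16) N (PowerSeries.map (Int.castRingHom (ZMod 16)) D)
      = coeff (R := ZMod 16) N
        ((∏ m ∈ Finset.Icc 1 N, ((1 : PowerSeries (ZMod 16)) - X ^ (2 * m)) ^ k)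
          * inv1 (∏ m ∈ Finset.Icc 1 N, ((1 : PowerSeries (ZMod 16)) - X ^ m) ^ (3 * k + 1))) := by
    set P' : PowerSeries (ZMod 16) := ∏ m ∈ Finset.Icc 1 N, ((1 : PowerSeries (ZMod 16)) - X ^ m) ^ (3 * k + 1)
    have h1 : coeff (R := ZMod 16) N (PowerSeries.map (Int.castRingHom (ZMod 16)) D)
        = coeff (R := ZMod 16) N ((PowerSeries.map (Int.castRingHom (ZMod 16)) D * P') * inv1 P') := by
      rw [mul_assoc, mul_inv1 ccP', mul_one]
    rw [h1]
    exact (hL2.mul (LowEq.refl (inv1 P'))) N (by omega)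
  -- Step 4: rewrite into the `core16` shape.
  have hprodpowP : (∏ m ∈ Finset.Icc 1 N, ((1 : PowerSeries (ZMod 16)) - X ^ m) ^ (3 * k + 1))
      = (∏ m ∈ Finset.Ioc 0 N, ((1 : PowerSeries (ZMod 16)) - X ^ m)) ^ (3 * k + 1) := by
    rw [hIcc, Finset.prod_pow]
  have hprodpowQ : (∏ m ∈ Finset.Icc 1 N, ((1 : PowerSeries (ZMod 16)) - X ^ (2 * m)) ^ k)
      = (∏ m ∈ Finset.Ioc 0 N, ((1 : PowerSeries (ZMod 16)) - X ^ (2 * m))) ^ k := by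
    rw [hIcc, Finset.prod_pow]
  have ccE1' : constantCoeff (R := ZMod 16) (∏ m ∈ Finset.Ioc 0 N, ((1 : PowerSeries (ZMod 16)) - X ^ m)) = 1 :=
    cc_prod fun m hm => cc_one_sub_X_pow (by have := (Finset.mem_Ioc.mp hm).1; omega)
  have hinvP : inv1 (∏ m ∈ Finset.Icc 1 N, ((1 : PowerSeries (ZMod 16)) - X ^ m) ^ (3 * k + 1))
      = (inv1 (∏ m ∈ Finset.Ioc 0 N, ((1 : PowerSeries (ZMod 16)) - X ^ m))) ^ (3 * k + 1) := by
    refine inv_unique' (mul_inv1 ccP') ?_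
    rw [hprodpowP, ← mul_pow, mul_inv1 ccE1', one_pow]
  rw [hprodpowQ, hinvP] at hfinal
  have hzero : coeff (R := ZMod 16) N (PowerSeries.map (Int.castRingHom (ZMod 16)) D) = 0 := by
    rw [hfinal, hN, hk]
    exact core16 j n
  have hcast : ((d k N : ℤ) : ZMod 16) = 0 := by
    rw [← hzero, PowerSeries.coeff_map, hD, PowerSeries.coeff_mk]
    rfl
  exact (ZMod.intCast_zmod_eq_zero_iff_dvd _ 16).mp hcast
end

section
/- For all integers n ≥ 0 and j ≥ 0, d_{13j+3}(13n + 11) ≡ 0 (mod 13). -/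
open Finset

namespace Stmt17

variable {R : Type*} [CommRing R]

def T (i : ℕ) : ℕ := i * (i+1) / 2

lemma two_T (i : ℕ) : 2 * T i = i * (i+1) := by
  have h : 2 ∣ i * (i+1) := (Nat.even_mul_succ_self i).two_dvd
  exact Nat.mul_div_cancel' h

lemma T_succ (i : ℕ) : T (i+1) = T i + (i+1) := by
  have h1 := two_T i
  have h2 := two_T (i+1)
  have : (i+1) * (i+1+1) = i * (i+1) + 2*(i+1) := by ring
  omega

lemma T_ge (i : ℕ) : i ≤ T i := by
  induction i with
  | zero => simp [T]
  | succ n ih => rw [T_succ]; omega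

def qb (q : R) : ℕ → ℕ → R
  | _, 0 => 1
  | 0, _+1 => 0
  | n+1, k+1 => qb q n (k+1) + q^(n-k) * qb q n k

variable (q : R)

@[simp] lemma qb_zero_right (n : ℕ) : qb q n 0 = 1 := by cases n <;> rfl

@[simp] lemma qb_zero_succ (k : ℕ) : qb q 0 (k+1) = 0 := rfl

lemma qb_succ_succ (n k : ℕ) :
    qb q (n+1) (k+1) = qb q n (k+1) + q^(n-k) * qb q n k := rfl

lemma qb_eq_zero {n k : ℕ} (h : n < k) : qb q n k = 0 := by
  induction n generalizing k with
  | zero => cases k with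
    | zero => omega
    | succ k => rfl
  | succ n ih =>
    cases k with
    | zero => omega
    | succ k =>
      rw [qb_succ_succ, ih (by omega), ih (by omega), mul_zero, add_zero]

@[simp] lemma qb_diag (n : ℕ) : qb q n n = 1 := by
  induction n with
  | zero => rfl
  | succ n ih => rw [qb_succ_succ, qb_eq_zero q (by omega), ih, Nat.sub_self, pow_zero,
      one_mul, zero_add]


lemma qb_star (n k : ℕ) : (1 - q^(k+1)) * qb q n (k+1) = (1 - q^(n-k)) * qb q n k := by
  induction n generalizing k with
  | zero =>
    cases k with
    | zero => simp
    | succ k => simp [qb_eq_zero q (show 0 < k+1 by omega)]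
  | succ n ih =>
    rcases Nat.lt_or_ge n k with hk | hk
    · rcases Nat.eq_or_lt_of_le (Nat.succ_le_of_lt hk) with he | hl
      · have : k = n+1 := by omega
        subst this
        rw [qb_eq_zero q (by omega), Nat.sub_self, pow_zero, sub_self, zero_mul, mul_zero]
      · rw [qb_eq_zero q (by omega), qb_eq_zero q (by omega), mul_zero, mul_zero]
    · obtain ⟨a, rfl⟩ : ∃ a, n = k + a := ⟨n - k, by omega⟩
      cases k with
      | zero =>
        have h0 := ih 0
        simp only [Nat.sub_zero, qb_zero_right, mul_one, pow_one, Nat.zero_add] at h0 ⊢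
        rw [qb_succ_succ, Nat.sub_zero, qb_zero_right, mul_one, mul_add, h0]
        ring
      | succ k =>
        have h1 := ih (k+1)
        have h2 := ih k
        have e3 : k + 1 + a - (k+1) = a := by omega
        have e4 : k + 1 + a - k = a + 1 := by omega
        rw [e3] at h1
        rw [e4] at h2
        rw [qb_succ_succ q (k+1+a) (k+1), qb_succ_succ q (k+1+a) k, e3, e4,
          show k+1+a+1-(k+1) = a+1 by omega]
        linear_combination h1 + q^(a+1) * h2

lemma qb_ruleB (n k : ℕ) : qb q (n+1) (k+1) = q^(k+1) * qb q n (k+1) + qb q n k := by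
  have h := qb_star q n k
  rw [qb_succ_succ]
  linear_combination h

lemma qb_step (n k : ℕ) :
    qb q (2*n+2) (k+2) = q^(k+2) * qb q (2*n) (k+2) + (1+q^(2*n+1)) * qb q (2*n) (k+1)
      + q^(2*n-k) * qb q (2*n) k := by
  have hB : qb q (2*n+2) (k+2) = q^(k+2) * qb q (2*n+1) (k+2) + qb q (2*n+1) (k+1) :=
    qb_ruleB q (2*n+1) (k+1)
  have hA1 : qb q (2*n+1) (k+2) = qb q (2*n) (k+2) + q^(2*n-(k+1)) * qb q (2*n) (k+1) :=
    qb_succ_succ q (2*n) (k+1)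
  have hA2 : qb q (2*n+1) (k+1) = qb q (2*n) (k+1) + q^(2*n-k) * qb q (2*n) k :=
    qb_succ_succ q (2*n) k
  rcases Nat.lt_or_ge k (2*n) with hk | hk
  · have e1 : q^(k+2) * q^(2*n-(k+1)) = q^(2*n+1) := by
      rw [← pow_add]; congr 1; omega
    rw [hB, hA1, hA2]
    linear_combination qb q (2*n) (k+1) * e1
  · have hz1 : qb q (2*n) (k+1) = 0 := qb_eq_zero q (by omega)
    have hz2 : qb q (2*n) (k+2) = 0 := qb_eq_zero q (by omega)
    rw [hB, hA1, hA2, hz1, hz2]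
    rcases Nat.eq_or_lt_of_le hk with he | hl
    · subst he
      simp
    · have hz3 : qb q (2*n) k = 0 := qb_eq_zero q (by omega)
      rw [hz3]
      ring

def pq (q : R) (m : ℕ) : R := ∏ i ∈ range m, (1 - q^(i+1))

@[simp] lemma pq_zero : pq q 0 = 1 := by simp [pq]

lemma pq_succ (m : ℕ) : pq q (m+1) = pq q m * (1 - q^(m+1)) := by
  simp [pq, prod_range_succ]

lemma qb_mul_pq {n k : ℕ} (h : k ≤ n) : qb q n k * (pq q k * pq q (n-k)) = pq q n := by
  induction n generalizing k with
  | zero =>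
    have : k = 0 := by omega
    subst this; simp
  | succ n ih =>
    cases k with
    | zero => simp
    | succ k =>
      rcases Nat.eq_or_lt_of_le h with he | hl
      · have : k = n := by omega
        subst this
        simp
      · obtain ⟨a, rfl⟩ : ∃ a, n = k + 1 + a := ⟨n - (k+1), by omega⟩
        have ih1 := ih (k := k+1) (by omega)
        have ih2 := ih (k := k) (by omega)
        have e1 : k + 1 + a - (k+1) = a := by omega
        have e2 : k + 1 + a - k = a + 1 := by omega
        have e3 : k + 1 + a + 1 - (k + 1) = a + 1 := by omega
        rw [e1] at ih1
        rw [e2] at ih2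
        rw [qb_succ_succ, e2, e3, pq_succ q (k+1+a), pq_succ q a, pq_succ q k]
        rw [pq_succ q k] at ih1
        rw [pq_succ q a] at ih2
        linear_combination (1 - q^(a+1)) * ih1 + q^(a+1) * (1 - q^(k+1)) * ih2


lemma pow_merge2 (a b c d : ℕ) (h : a + b = c + d) : q^a * q^b = q^c * q^d := by
  rw [← pow_add, ← pow_add, h]

def eE (k n : ℕ) : ℕ := if n ≤ k then T (k - n) else T (n - 1 - k)

lemma eE_E1 (k n : ℕ) : eE k (n+1) + k = n + eE k n := by
  unfold eE
  rcases Nat.lt_or_ge k (n+1) with h1 | h1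
  · rw [if_neg (by omega)]
    rcases Nat.lt_or_ge k n with h2 | h2
    · rw [if_neg (by omega), show n + 1 - 1 - k = (n-1-k)+1 by omega, T_succ]
      omega
    · have hkn : k = n := by omega
      subst hkn
      rw [if_pos (by omega), show k + 1 - 1 - k = 0 by omega, show k - k = 0 by omega]
      omega
  · rw [if_pos (by omega), if_pos (by omega), show k - n = (k - (n+1)) + 1 by omega, T_succ]
    omega

lemma eE_E2 (k n : ℕ) : eE (k+1) (n+1) = eE k n := by
  unfold eE
  rcases Nat.lt_or_ge k n with h1 | h1
  · rw [if_neg (by omega), if_neg (by omega)]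
    congr 1
    omega
  · rw [if_pos (by omega), if_pos (by omega)]
    congr 1
    omega

lemma eE_E3 (k n : ℕ) (hk : k ≤ 2*n) : eE (k+2) (n+1) + (2*n - k) = (n+1) + eE k n := by
  unfold eE
  rcases Nat.lt_or_ge (k+1) n with h1 | h1
  · rw [if_neg (by omega), if_neg (by omega),
      show n - 1 - k = (n + 1 - 1 - (k+2)) + 1 by omega, T_succ]
    omega
  · rcases Nat.lt_or_ge k n with h2 | h2
    · rw [if_pos (by omega), if_neg (by omega), show k + 2 - (n+1) = 0 by omega,
        show n - 1 - k = 0 by omega]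
      omega
    · rw [if_pos (by omega), if_pos (by omega),
        show k + 2 - (n+1) = (k - n) + 1 by omega, T_succ]
      omega

def gc (q : R) (n k : ℕ) : R := (-1)^k * qb q (2*n) k * q^(eE k n)

lemma gc_eq_zero {n k : ℕ} (h : 2*n < k) : gc q n k = 0 := by
  rw [gc, qb_eq_zero q h, mul_zero, zero_mul]

lemma gc_L0 (n : ℕ) : gc q (n+1) 0 = q^n * gc q n 0 := by
  unfold gc
  simp only [pow_zero, qb_zero_right, one_mul, mul_one]
  rw [← pow_add]
  congr 1
  have := eE_E1 0 n
  omega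

lemma gc_L1 (n : ℕ) : gc q (n+1) 1 = q^n * gc q n 1 - (1+q^(2*n+1)) * gc q n 0 := by
  unfold gc
  rw [show 2*(n+1) = 2*n+2 by omega]
  have hq : qb q (2*n+2) 1 = q * qb q (2*n) 1 + q^(2*n+1) + 1 := by
    rw [show (1:ℕ) = 0 + 1 from rfl, qb_ruleB q (2*n+1) 0, qb_succ_succ q (2*n) 0]
    simp only [qb_zero_right, Nat.sub_zero, pow_one, mul_one]
    ring
  rw [hq]
  have p1 : q^(eE 1 (n+1)) * q^1 = q^n * q^(eE 1 n) := pow_merge2 q _ _ _ _ (by have := eE_E1 1 n; omega)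
  have p2 : q^(eE 1 (n+1)) = q^(eE 0 n) := by rw [eE_E2 0 n]
  simp only [pow_one, qb_zero_right, mul_one] at *
  linear_combination (-(qb q (2*n) 1)) * p1 - (1+q^(2*n+1)) * p2

lemma gc_L2 (n k : ℕ) : gc q (n+1) (k+2)
    = q^n * gc q n (k+2) - (1+q^(2*n+1)) * gc q n (k+1) + q^(n+1) * gc q n k := by
  rcases Nat.lt_or_ge (2*n) k with hk | hk
  · rw [gc_eq_zero q (show 2*(n+1) < k+2 by omega), gc_eq_zero q (show 2*n < k+2 by omega),
      gc_eq_zero q (show 2*n < k+1 by omega), gc_eq_zero q hk]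
    ring
  · unfold gc
    rw [show 2*(n+1) = 2*n+2 by omega, qb_step]
    have hs : (-1 : R)^(k+2) = (-1)^k := by
      rw [pow_add]; norm_num
    have hs1 : (-1 : R)^(k+1) = -((-1):R)^k := by
      rw [pow_add]; norm_num
    rw [hs, hs1]
    have p1 : q^(k+2) * q^(eE (k+2) (n+1)) = q^n * q^(eE (k+2) n) :=
      pow_merge2 q _ _ _ _ (by have := eE_E1 (k+2) n; omega)
    have p2 : q^(eE (k+2) (n+1)) = q^(eE (k+1) n) := by rw [eE_E2 (k+1) n]
    have p3 : q^(2*n-k) * q^(eE (k+2) (n+1)) = q^(n+1) * q^(eE k n) :=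
      pow_merge2 q _ _ _ _ (by have := eE_E3 k n hk; omega)
    linear_combination ((-1:R)^k * qb q (2*n) (k+2)) * p1
      + ((-1:R)^k * (1+q^(2*n+1)) * qb q (2*n) (k+1)) * p2
      + ((-1:R)^k * qb q (2*n) k) * p3

lemma gauss_step (n : ℕ) (w : R) :
    (∑ k ∈ range (2*n+1), gc q n k * w^k) * ((1 - q^(n+1)*w) * (q^n - w))
      = ∑ k ∈ range (2*(n+1)+1), gc q (n+1) k * w^k := by
  have hadd : ∀ k : ℕ, k+1+1 = k+2 := fun k => by omega
  have hz1 : gc q n (2*n+1) = 0 := gc_eq_zero q (by omega)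
  have hz2 : gc q n (2*n+1+1) = 0 := gc_eq_zero q (by omega)
  have shift1 : ∑ k ∈ range (2*n+1), gc q n k * w^(k+1)
      = (∑ k ∈ range (2*n+1), gc q n (k+1) * w^(k+2)) + gc q n 0 * w := by
    have h1 : ∑ k ∈ range (2*n+1+1), gc q n k * w^(k+1)
        = ∑ k ∈ range (2*n+1), gc q n k * w^(k+1) := by
      rw [sum_range_succ, hz1, zero_mul, add_zero]
    rw [← h1, sum_range_succ']
    simp only [hadd, zero_add, pow_one]
  have shift2 : ∑ k ∈ range (2*n+1), gc q n k * w^k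
      = ((∑ k ∈ range (2*n+1), gc q n (k+2) * w^(k+2)) + gc q n 1 * w) + gc q n 0 := by
    have h1 : ∑ k ∈ range (2*n+1+1+1), gc q n k * w^k
        = ∑ k ∈ range (2*n+1), gc q n k * w^k := by
      rw [sum_range_succ, sum_range_succ, hz2, hz1, zero_mul, add_zero, zero_mul, add_zero]
    rw [← h1, sum_range_succ', sum_range_succ']
    simp only [hadd, zero_add, pow_zero, pow_one, mul_one]
  have hR : ∑ k ∈ range (2*(n+1)+1), gc q (n+1) k * w^k
      = ((∑ k ∈ range (2*n+1), gc q (n+1) (k+2) * w^(k+2)) + gc q (n+1) 1 * w)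
          + gc q (n+1) 0 := by
    rw [show 2*(n+1)+1 = 2*n+1+1+1 by omega, sum_range_succ', sum_range_succ']
    simp only [hadd, zero_add, pow_zero, pow_one, mul_one]
  rw [hR]
  have hL2 : ∀ k ∈ range (2*n+1), gc q (n+1) (k+2) * w^(k+2)
      = (q^n * gc q n (k+2) - (1+q^(2*n+1)) * gc q n (k+1) + q^(n+1) * gc q n k) * w^(k+2) := by
    intro k _
    rw [gc_L2]
  rw [Finset.sum_congr rfl hL2, gc_L1, gc_L0]
  have split : ∑ k ∈ range (2*n+1),
        (q^n * gc q n (k+2) - (1+q^(2*n+1)) * gc q n (k+1) + q^(n+1) * gc q n k) * w^(k+2)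
      = q^n * (∑ k ∈ range (2*n+1), gc q n (k+2) * w^(k+2))
        - (1+q^(2*n+1)) * (∑ k ∈ range (2*n+1), gc q n (k+1) * w^(k+2))
        + q^(n+1) * (∑ k ∈ range (2*n+1), gc q n k * w^(k+2)) := by
    rw [Finset.mul_sum, Finset.mul_sum, Finset.mul_sum, ← Finset.sum_sub_distrib,
      ← Finset.sum_add_distrib]
    exact Finset.sum_congr rfl fun k _ => by ring
  rw [split]
  have expand : (∑ k ∈ range (2*n+1), gc q n k * w^k) * ((1 - q^(n+1)*w) * (q^n - w))
      = q^n * (∑ k ∈ range (2*n+1), gc q n k * w^k)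
        - (1+q^(2*n+1)) * (∑ k ∈ range (2*n+1), gc q n k * w^(k+1))
        + q^(n+1) * (∑ k ∈ range (2*n+1), gc q n k * w^(k+2)) := by
    rw [Finset.mul_sum, Finset.mul_sum, Finset.mul_sum, Finset.sum_mul,
      ← Finset.sum_sub_distrib, ← Finset.sum_add_distrib]
    exact Finset.sum_congr rfl fun k _ => by ring
  rw [expand, shift1, shift2]
  ring

theorem gauss (n : ℕ) (w : R) :
    (∏ i ∈ range n, (1 - q^(i+1) * w)) * (∏ i ∈ range n, (q^i - w))
      = ∑ k ∈ range (2*n+1), gc q n k * w^k := by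
  induction n with
  | zero => simp [gc, eE, T]
  | succ n ih =>
    rw [prod_range_succ, prod_range_succ, ← gauss_step q n w, ← ih]
    ring

lemma qb_map {S : Type*} [CommRing S] (φ : R →+* S) (Q : R) (n k : ℕ) :
    φ (qb Q n k) = qb (φ Q) n k := by
  induction n generalizing k with
  | zero => cases k <;> simp
  | succ n ih =>
    cases k with
    | zero => simp
    | succ k => simp [qb_succ_succ, ih]

lemma gc_map {S : Type*} [CommRing S] (φ : R →+* S) (Q : R) (n k : ℕ) :
    φ (gc Q n k) = gc (φ Q) n k := by
  simp [gc, qb_map]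

open Polynomial in
theorem jacobi_sum (Q : R) (m : ℕ) :
    (-1:R)^(m+1) * (pq Q (m+1) * pq Q m)
      = ∑ k ∈ range (2*(m+1)+1), gc Q (m+1) k * (k:R) := by
  have hg := gauss (Polynomial.C Q) (m+1) (Polynomial.X (R := R))
  rw [prod_range_succ' (fun i => (Polynomial.C Q)^i - Polynomial.X) m] at hg
  have hR : (∑ k ∈ range (2*(m+1)+1), gc (Polynomial.C Q) (m+1) k * Polynomial.X^k)
      = ∑ k ∈ range (2*(m+1)+1), Polynomial.C (gc Q (m+1) k) * Polynomial.X^k :=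
    Finset.sum_congr rfl fun k _ => by rw [← gc_map]
  rw [hR] at hg
  have he := congrArg (fun p => Polynomial.eval (1:R) (Polynomial.derivative p)) hg
  simp only [derivative_mul, derivative_sum, derivative_C_mul_X_pow, eval_add, eval_mul,
    eval_finset_sum, eval_sub, eval_one, eval_X, eval_pow, eval_C, pow_zero, derivative_one,
    derivative_X, derivative_sub, derivative_C, derivative_X_pow, eval_prod, one_pow, mul_one,
    sub_self, mul_zero, zero_mul, add_zero, zero_add, zero_sub, eval_neg, mul_neg] at he
  have hB : ∏ i ∈ range m, (Q^(i+1) - 1) = (-1)^m * pq Q m := by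
    calc ∏ i ∈ range m, (Q^(i+1) - 1)
        = ∏ i ∈ range m, ((-1) * (1 - Q^(i+1))) := Finset.prod_congr rfl fun i _ => by ring
      _ = (∏ _i ∈ range m, (-1:R)) * ∏ i ∈ range m, (1 - Q^(i+1)) := Finset.prod_mul_distrib
      _ = (-1)^m * pq Q m := by rw [Finset.prod_const, Finset.card_range, pq]
  rw [hB] at he
  have hpq : pq Q (m+1) = ∏ x ∈ range (m+1), (1 - Q^(x+1)) := rfl
  rw [← hpq] at he
  linear_combination he

section Series

open PowerSeries

variable {A : Type*} [CommRing A]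

lemma mx_mul {K : ℕ} {a b c d : A⟦X⟧} (h1 : (X:A⟦X⟧)^K ∣ a - b) (h2 : (X:A⟦X⟧)^K ∣ c - d) :
    (X:A⟦X⟧)^K ∣ a*c - b*d := by
  have : a*c - b*d = (a-b)*c + b*(c-d) := by ring
  rw [this]
  exact dvd_add (h1.mul_right c) (h2.mul_left b)

lemma mx_trans {K : ℕ} {a b c : A⟦X⟧} (h1 : (X:A⟦X⟧)^K ∣ a - b) (h2 : (X:A⟦X⟧)^K ∣ b - c) :
    (X:A⟦X⟧)^K ∣ a - c := by
  have : a - c = (a - b) + (b - c) := by ring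
  rw [this]
  exact dvd_add h1 h2

lemma mx_pow {K e : ℕ} {a b : A⟦X⟧} (h : (X:A⟦X⟧)^K ∣ a - b) :
    (X:A⟦X⟧)^K ∣ a^e - b^e := by
  induction e with
  | zero => simp
  | succ e ih =>
    rw [pow_succ, pow_succ]
    exact mx_mul ih h

lemma mx_coeff {K N : ℕ} {f g : A⟦X⟧} (h : (X:A⟦X⟧)^K ∣ f - g) (hN : N < K) :
    coeff (R := A) N f = coeff (R := A) N g := by
  rw [X_pow_dvd_iff] at h
  have := h N hN
  rw [map_sub, sub_eq_zero] at this
  exact this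

lemma x_dvd_q_pow (t K m : ℕ) (h : K ≤ t * m) : (X:A⟦X⟧)^K ∣ ((X:A⟦X⟧)^t)^m := by
  rw [← pow_mul]
  exact pow_dvd_pow _ h

variable (t : ℕ) (ht : 1 ≤ t)

lemma qb_stab (ht : 1 ≤ t) {K : ℕ} (hK : 1 ≤ K) {a b : ℕ} (ha : K ≤ a) (hb : K ≤ b) :
    (X:A⟦X⟧)^K ∣ qb ((X:A⟦X⟧)^t) (a+b) a - qb ((X:A⟦X⟧)^t) (2*K) K := by
  set q : A⟦X⟧ := (X:A⟦X⟧)^t with hq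
  have key1 : ∀ b' : ℕ, K ≤ b' → (X:A⟦X⟧)^K ∣ qb q (a+b') a - qb q (a+K) a := by
    intro b' hb'
    induction b', hb' using Nat.le_induction with
    | base => simp
    | succ b' hb' ih =>
      refine mx_trans ?_ ih
      obtain ⟨a', rfl⟩ : ∃ a', a = a'+1 := ⟨a-1, by omega⟩
      have hdef : qb q (a'+1+(b'+1)) (a'+1) = qb q (a'+1+b') (a'+1)
          + q^((a'+b'+1)-a') * qb q (a'+b'+1) a' := by
        rw [show a'+1+(b'+1) = (a'+b'+1)+1 by omega, qb_succ_succ,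
          show a'+b'+1 = a'+1+b' by omega]
      rw [hdef, show a'+b'+1-a' = b'+1 by omega]
      have : qb q (a'+1+b') (a'+1) + q^(b'+1) * qb q (a'+b'+1) a' - qb q (a'+1+b') (a'+1)
          = q^(b'+1) * qb q (a'+b'+1) a' := by ring
      rw [this]
      exact ((x_dvd_q_pow t K (b'+1) (by have := Nat.le_mul_of_pos_left (b'+1) (show 0 < t by omega); omega)).mul_right _)
  have key2 : ∀ a' : ℕ, K ≤ a' → (X:A⟦X⟧)^K ∣ qb q (a'+K) a' - qb q (K+K) K := by
    intro a' ha'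
    induction a', ha' using Nat.le_induction with
    | base => simp
    | succ a' ha' ih =>
      refine mx_trans ?_ ih
      have hdef : qb q (a'+1+K) (a'+1) = q^(a'+1) * qb q (a'+K) (a'+1) + qb q (a'+K) a' := by
        rw [show a'+1+K = (a'+K)+1 by omega, qb_ruleB]
      rw [hdef]
      have : q^(a'+1) * qb q (a'+K) (a'+1) + qb q (a'+K) a' - qb q (a'+K) a'
          = q^(a'+1) * qb q (a'+K) (a'+1) := by ring
      rw [this]
      exact ((x_dvd_q_pow t K (a'+1) (by have := Nat.le_mul_of_pos_left (a'+1) (show 0 < t by omega); omega)).mul_right _)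
  have h2 := key2 a ha
  have h1 := key1 b hb
  rw [show K + K = 2*K by omega] at h2
  exact mx_trans h1 h2

lemma pq_stab (ht : 1 ≤ t) {K : ℕ} {m : ℕ} (hm : K ≤ m) :
    (X:A⟦X⟧)^K ∣ pq ((X:A⟦X⟧)^t) m - pq ((X:A⟦X⟧)^t) K := by
  set q : A⟦X⟧ := (X:A⟦X⟧)^t with hq
  induction m, hm using Nat.le_induction with
  | base => simp
  | succ m hm ih =>
    refine mx_trans ?_ ih
    rw [pq_succ]
    have : pq q m * (1 - q^(m+1)) - pq q m = -(pq q m * q^(m+1)) := by ring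
    rw [this]
    exact (dvd_neg.mpr (((x_dvd_q_pow t K (m+1) (by have := Nat.le_mul_of_pos_left (m+1) (show 0 < t by omega); omega)).mul_left _)))

lemma pq_const (ht : 1 ≤ t) {m : ℕ} : constantCoeff (R := A) (pq ((X:A⟦X⟧)^t) m) = 1 := by
  induction m with
  | zero => simp
  | succ m ih =>
    rw [pq_succ, map_mul, ih, one_mul, map_sub, map_one, ← pow_mul, map_pow,
      constantCoeff_X]
    rw [zero_pow (by have := Nat.le_mul_of_pos_left (m+1) (show 0 < t by omega); omega)]
    ring

lemma mx_cancel {K : ℕ} {f g : A⟦X⟧} (hf : constantCoeff (R := A) f = 1)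
    (h : (X:A⟦X⟧)^K ∣ f * g) : (X:A⟦X⟧)^K ∣ g := by
  have hu : f * PowerSeries.invOfUnit f 1 = 1 := PowerSeries.mul_invOfUnit f 1 (by simpa using hf)
  have : g = PowerSeries.invOfUnit f 1 * (f * g) := by
    rw [← mul_assoc, mul_comm _ f, hu, one_mul]
  rw [this]
  exact h.mul_left _

theorem core (t K : ℕ) (ht : 1 ≤ t) (hK : 1 ≤ K) :
    (X:A⟦X⟧)^K ∣ (pq ((X:A⟦X⟧)^t) K)^3
      - ∑ i ∈ range K, (-1)^i * ((2*i+1 : ℕ) : A⟦X⟧) * (X:A⟦X⟧)^(t * T i) := by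
  set q : A⟦X⟧ := (X:A⟦X⟧)^t with hq
  have hqT : ∀ i : ℕ, q ^ (T i) = (X:A⟦X⟧)^(t * T i) := fun i => by
    rw [hq, ← pow_mul]
  set Q : A⟦X⟧ := qb q (2*K) K with hQ
  set P : A⟦X⟧ := pq q K with hP
  -- Jacobi finite identity at n = 2K
  have hj := jacobi_sum q (2*K-1)
  rw [show 2*K-1+1 = 2*K by omega] at hj
  have hev : ((-1 : A⟦X⟧))^(2*K) = 1 := Even.neg_one_pow (even_two_mul K)
  rw [hev, one_mul] at hj
  -- termwise stabilization
  have hterm : ∀ k ∈ range (2*(2*K)+1),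
      (X:A⟦X⟧)^K ∣ gc q (2*K) k * (k : A⟦X⟧)
        - Q * ((-1)^k * (k : A⟦X⟧) * q^(eE k (2*K))) := by
    intro k hk
    rcases le_or_gt K (t * eE k (2*K)) with hle | hlt
    · refine dvd_sub ?_ ?_
      · rw [gc]
        have : (-1:A⟦X⟧)^k * qb q (2*(2*K)) k * q^(eE k (2*K)) * (k:A⟦X⟧)
            = ((-1:A⟦X⟧)^k * qb q (2*(2*K)) k * (k:A⟦X⟧)) * q^(eE k (2*K)) := by ring
        rw [this]
        exact ((x_dvd_q_pow t K _ hle).mul_left _)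
      · have : Q * ((-1)^k * (k : A⟦X⟧) * q^(eE k (2*K)))
            = (Q * ((-1)^k * (k : A⟦X⟧))) * q^(eE k (2*K)) := by ring
        rw [this]
        exact ((x_dvd_q_pow t K _ hle).mul_left _)
    · have he : eE k (2*K) < K := by
        calc eE k (2*K) ≤ t * eE k (2*K) := Nat.le_mul_of_pos_left _ (by omega)
        _ < K := hlt
      have hreg : K ≤ k ∧ K ≤ 2*(2*K) - k := by
        unfold eE at he
        split_ifs at he with h
        · have := T_ge (k - 2*K)
          omega
        · have := T_ge (2*K - 1 - k)
          omega
      have hst : (X:A⟦X⟧)^K ∣ qb q (2*(2*K)) k - Q := by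
        have := qb_stab (A := A) t ht hK hreg.1 hreg.2
        rw [show k + (2*(2*K) - k) = 2*(2*K) by omega] at this
        exact this
      have heq : gc q (2*K) k * (k : A⟦X⟧) - Q * ((-1)^k * (k : A⟦X⟧) * q^(eE k (2*K)))
          = ((-1)^k * (k : A⟦X⟧) * q^(eE k (2*K))) * (qb q (2*(2*K)) k - Q) := by
        rw [gc]; ring
      rw [heq]
      exact hst.mul_left _
  have hsum : (X:A⟦X⟧)^K ∣ (∑ k ∈ range (2*(2*K)+1), gc q (2*K) k * (k : A⟦X⟧))
      - Q * (∑ k ∈ range (2*(2*K)+1), (-1)^k * (k : A⟦X⟧) * q^(eE k (2*K))) := by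
    rw [Finset.mul_sum, ← Finset.sum_sub_distrib]
    exact Finset.dvd_sum hterm
  -- reindex the inner sum
  set f : ℕ → A⟦X⟧ := fun k => (-1)^k * (k : A⟦X⟧) * q^(eE k (2*K)) with hf
  have hsplit : ∑ k ∈ range (2*(2*K)+1), f k
      = (∑ j ∈ range (2*K), (f (2*K-1-j) + f (2*K+j))) + f (2*K + 2*K) := by
    rw [show 2*(2*K)+1 = 2*K + (2*K+1) by omega, Finset.sum_range_add,
      ← Finset.sum_range_reflect (fun j => f j) (2*K), Finset.sum_range_succ,
      Finset.sum_add_distrib]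
    ring
  have hpair : ∀ j ∈ range (2*K),
      f (2*K-1-j) + f (2*K+j) = (-1)^j * ((2*j+1 : ℕ) : A⟦X⟧) * q^(T j) := by
    intro j hj
    rw [Finset.mem_range] at hj
    have he1 : eE (2*K+j) (2*K) = T j := by
      unfold eE
      rw [if_pos (by omega), show 2*K+j-2*K = j by omega]
    have he2 : eE (2*K-1-j) (2*K) = T j := by
      unfold eE
      rw [if_neg (by omega), show 2*K-1-(2*K-1-j) = j by omega]
    have hs1 : ((-1 : A⟦X⟧))^(2*K+j) = (-1)^j := by
      rw [pow_add, hev, one_mul]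
    have hs2 : ((-1 : A⟦X⟧))^(2*K-1-j) = -(-1)^j := by
      have : 2*K+j = (2*K-1-j) + (2*j+1) := by omega
      have h2 : ((-1:A⟦X⟧))^(2*K+j) = (-1)^(2*K-1-j) * (-1)^(2*j+1) := by
        rw [this, pow_add]
      rw [hs1] at h2
      have h3 : ((-1:A⟦X⟧))^(2*j+1) = -1 := Odd.neg_one_pow ⟨j, by omega⟩
      rw [h3] at h2
      linear_combination h2
    have hc : ((2*K+j : ℕ) : A⟦X⟧) = ((2*K-1-j : ℕ) : A⟦X⟧) + ((2*j+1 : ℕ) : A⟦X⟧) := by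
      rw [← Nat.cast_add]
      congr 1
      omega
    rw [hf]
    simp only [he1, he2, hs1, hs2, hc]
    ring
  have htop : (X:A⟦X⟧)^K ∣ f (2*K + 2*K) := by
    have heT : eE (2*K+2*K) (2*K) = T (2*K) := by
      unfold eE
      rw [if_pos (by omega), show 2*K+2*K-2*K = 2*K by omega]
    rw [hf]
    simp only [heT]
    have : K ≤ t * T (2*K) := by
      have h1 := T_ge (2*K)
      have := Nat.le_mul_of_pos_left (T (2*K)) (show 0 < t by omega)
      omega
    exact ((x_dvd_q_pow t K _ this).mul_left _)
  -- trim to range K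
  have htrim : (X:A⟦X⟧)^K ∣ (∑ j ∈ range (2*K), (-1)^j * ((2*j+1:ℕ) : A⟦X⟧) * q^(T j))
      - ∑ j ∈ range K, (-1)^j * ((2*j+1:ℕ) : A⟦X⟧) * q^(T j) := by
    rw [show 2*K = K + K by omega, Finset.sum_range_add]
    have : (∑ j ∈ range K, (-1)^j * ((2*j+1:ℕ) : A⟦X⟧) * q^(T j))
        + (∑ j ∈ range K, (-1)^(K+j) * ((2*(K+j)+1:ℕ) : A⟦X⟧) * q^(T (K+j)))
        - ∑ j ∈ range K, (-1)^j * ((2*j+1:ℕ) : A⟦X⟧) * q^(T j)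
        = ∑ j ∈ range K, (-1)^(K+j) * ((2*(K+j)+1:ℕ) : A⟦X⟧) * q^(T (K+j)) := by ring
    rw [this]
    refine Finset.dvd_sum fun j _ => ?_
    have hT : K ≤ t * T (K+j) := by
      have h1 := T_ge (K+j)
      have := Nat.le_mul_of_pos_left (T (K+j)) (show 0 < T (K+j) by omega)
      have := Nat.le_mul_of_pos_left (T (K+j)) (show 0 < t by omega)
      omega
    exact ((x_dvd_q_pow t K _ hT).mul_left _)
  -- combine
  set SK : A⟦X⟧ := ∑ j ∈ range K, (-1)^j * ((2*j+1:ℕ) : A⟦X⟧) * q^(T j) with hSK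
  have hqsig : (X:A⟦X⟧)^K ∣ (∑ k ∈ range (2*(2*K)+1), f k) - SK := by
    rw [hsplit, Finset.sum_congr rfl hpair]
    refine mx_trans (b := ∑ j ∈ range (2*K), (-1)^j * ((2*j+1:ℕ) : A⟦X⟧) * q^(T j)) ?_ ?_
    · have : (∑ j ∈ range (2*K), (-1)^j * ((2*j+1:ℕ) : A⟦X⟧) * q^(T j)) + f (2*K+2*K)
          - (∑ j ∈ range (2*K), (-1)^j * ((2*j+1:ℕ) : A⟦X⟧) * q^(T j)) = f (2*K+2*K) := by
        ring
      rw [this]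
      exact htop
    · exact htrim
  have hc1 : (X:A⟦X⟧)^K ∣ pq q (2*K) - P := pq_stab t ht (by omega)
  have hc2 : (X:A⟦X⟧)^K ∣ pq q (2*K-1) - P := pq_stab t ht (by omega)
  have hc3 : (X:A⟦X⟧)^K ∣ pq q (2*K) * pq q (2*K-1) - P * P := mx_mul hc1 hc2
  have hc5 : (X:A⟦X⟧)^K ∣ (∑ k ∈ range (2*(2*K)+1), gc q (2*K) k * (k:A⟦X⟧)) - Q * SK := by
    refine mx_trans hsum ?_
    have : Q * (∑ k ∈ range (2*(2*K)+1), f k) - Q * SK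
        = Q * ((∑ k ∈ range (2*(2*K)+1), f k) - SK) := by ring
    rw [this]
    exact hqsig.mul_left Q
  have hc6 : (X:A⟦X⟧)^K ∣ P * P - Q * SK := by
    refine mx_trans ?_ hc5
    rw [← hj]
    have : P * P - pq q (2*K) * pq q (2*K-1) = -(pq q (2*K) * pq q (2*K-1) - P * P) := by ring
    rw [this]
    exact dvd_neg.mpr hc3
  have hc8 : Q * (P * P) = pq q (2*K) := by
    have := qb_mul_pq q (n := 2*K) (k := K) (by omega)
    rw [show 2*K - K = K by omega] at this
    exact this
  have hc9 : (X:A⟦X⟧)^K ∣ Q * (P * P) - P := by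
    rw [hc8]
    exact hc1
  have hc10 : (X:A⟦X⟧)^K ∣ P^4 - P * SK := by
    have h7 : (X:A⟦X⟧)^K ∣ P^4 - Q * SK * (P * P) := by
      have : P^4 - Q * SK * (P*P) = (P * P - Q * SK) * (P * P) := by ring
      rw [this]
      exact hc6.mul_right _
    refine mx_trans h7 ?_
    have : Q * SK * (P * P) - P * SK = (Q * (P * P) - P) * SK := by ring
    rw [this]
    exact hc9.mul_right _
  have hc11 : (X:A⟦X⟧)^K ∣ P * (P^3 - SK) := by
    have : P * (P^3 - SK) = P^4 - P * SK := by ring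
    rw [this]
    exact hc10
  have hfin := mx_cancel (pq_const t ht) hc11
  rw [hSK] at hfin
  simp only [hqT] at hfin
  exact hfin

lemma pq_eq (t M : ℕ) :
    (∏ m ∈ Icc 1 M, (1 - (X:A⟦X⟧)^(t*m))) = pq ((X:A⟦X⟧)^t) M := by
  induction M with
  | zero => simp [pq]
  | succ M ih =>
    rw [Finset.prod_Icc_succ_top (by omega), ih, pq_succ, pow_mul]

/-- supported on multiples of 13 -/
def Supp (f : A⟦X⟧) : Prop := ∀ c : ℕ, ¬ (13 ∣ c) → coeff (R := A) c f = 0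

lemma supp_one : Supp (1 : A⟦X⟧) := by
  intro c hc
  rw [coeff_one, if_neg (by rintro rfl; exact hc ⟨0, rfl⟩)]

lemma supp_mul {f g : A⟦X⟧} (hf : Supp f) (hg : Supp g) : Supp (f * g) := by
  intro c hc
  rw [coeff_mul]
  refine Finset.sum_eq_zero fun p hp => ?_
  rw [Finset.HasAntidiagonal.mem_antidiagonal] at hp
  rcases Classical.em (13 ∣ p.1) with h1 | h1
  · rcases Classical.em (13 ∣ p.2) with h2 | h2
    · exact absurd (hp ▸ dvd_add h1 h2) hc
    · rw [hg p.2 h2, mul_zero]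
  · rw [hf p.1 h1, zero_mul]

lemma supp_pow {f : A⟦X⟧} (hf : Supp f) (e : ℕ) : Supp (f ^ e) := by
  induction e with
  | zero => simpa using supp_one
  | succ e ih => rw [pow_succ]; exact supp_mul ih hf

lemma supp_X13 (m : ℕ) : Supp ((1 : A⟦X⟧) - X^(13*m)) := by
  intro c hc
  rw [map_sub, coeff_one, coeff_X_pow, if_neg (by rintro rfl; exact hc ⟨0, rfl⟩),
    if_neg (by rintro rfl; exact hc ⟨m, rfl⟩)]
  ring

lemma supp_prod {s : Finset ℕ} {g : ℕ → A⟦X⟧} (hg : ∀ m ∈ s, Supp (g m)) :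
    Supp (∏ m ∈ s, g m) := by
  classical
  induction s using Finset.induction_on with
  | empty => simpa using supp_one
  | insert _ _ hnotmem ih =>
    rw [Finset.prod_insert hnotmem]
    exact supp_mul (hg _ (Finset.mem_insert_self _ _))
      (ih fun m hm => hg m (Finset.mem_insert_of_mem hm))

lemma prod_tail_cong (g : ℕ → A⟦X⟧) (N : ℕ)
    (hg : ∀ m, N < m → (X:A⟦X⟧)^(N+1) ∣ g m - 1) {M : ℕ} (hNM : N ≤ M) :
    (X:A⟦X⟧)^(N+1) ∣ (∏ m ∈ Icc 1 M, g m) - (∏ m ∈ Icc 1 N, g m) := by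
  induction M, hNM using Nat.le_induction with
  | base => simp
  | succ M hM ih =>
    refine mx_trans ?_ ih
    rw [Finset.prod_Icc_succ_top (by omega)]
    have := mx_mul (K := N+1) (a := ∏ m ∈ Icc 1 M, g m) (b := ∏ m ∈ Icc 1 M, g m)
      (c := g (M+1)) (d := 1) (by simp) (hg (M+1) (by omega))
    simpa using this

lemma one_sub_xpow_pow_cong (N m e : ℕ) (hm : N < m) :
    (X:A⟦X⟧)^(N+1) ∣ (1 - (X:A⟦X⟧)^m)^e - 1 := by
  have h1 : (X:A⟦X⟧)^(N+1) ∣ (1 - (X:A⟦X⟧)^m) - 1 := by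
    have : (1 - (X:A⟦X⟧)^m) - 1 = -(X^m) := by ring
    rw [this]
    exact dvd_neg.mpr (pow_dvd_pow _ (by omega))
  simpa using mx_pow (e := e) h1

lemma coeff_jterm (c e i : ℕ) :
    coeff (R := A) c ((-1)^i * ((2*i+1:ℕ) : A⟦X⟧) * (X:A⟦X⟧)^e)
      = (-1)^i * ((2*i+1:ℕ) : A) * (if c = e then 1 else 0) := by
  have h : ((-1:(A⟦X⟧)))^i * ((2*i+1:ℕ) : A⟦X⟧)
      = PowerSeries.C (R := A) ((-1)^i * ((2*i+1:ℕ):A)) := by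
    rw [map_mul, map_pow, map_neg, map_one, map_natCast]
  rw [h, PowerSeries.coeff_C_mul, PowerSeries.coeff_X_pow, mul_assoc]

end Series
end Stmt17

open Stmt17 PowerSeries Finset

instance : Fact (Nat.Prime 13) := ⟨by norm_num⟩

instance : CharP ((ZMod 13)⟦X⟧) 13 :=
  charP_of_injective_ringHom (f := PowerSeries.C (R := ZMod 13)) PowerSeries.C_injective 13


theorem stmt_17 (d : ℕ → ℕ → ℤ) (hd : ElongatedDiamondGF d) :
    ∀ n j : ℕ, (13 : ℤ) ∣ d (13 * j + 3) (13 * n + 11) := by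
  intro n j
  set k : ℕ := 13*j + 3 with hkdef
  have hk1 : 1 ≤ k := by omega
  set K : ℕ := 13*n + 12 with hKdef
  set D : (ZMod 13)⟦X⟧ := PowerSeries.mk (fun i => ((d k i : ℤ) : ZMod 13)) with hD
  have hmapD : PowerSeries.map (Int.castRingHom (ZMod 13)) (PowerSeries.mk fun i => d k i)
      = D := by
    ext N
    rw [PowerSeries.coeff_map, PowerSeries.coeff_mk, hD, PowerSeries.coeff_mk]
    rfl
  have hcoeff : ∀ N : ℕ,
      coeff (R := ZMod 13) N (D * ∏ m ∈ Icc 1 N, (1 - X^m)^(3*k+1))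
        = coeff (R := ZMod 13) N (∏ m ∈ Icc 1 N, (1 - X^(2*m))^k) := by
    intro N
    have h := congrArg (Int.castRingHom (ZMod 13)) (hd k hk1 N)
    simp only [← PowerSeries.coeff_map, map_mul, map_prod, map_sub, map_pow, map_one,
      PowerSeries.map_X, hmapD] at h
    exact h
  set A : (ZMod 13)⟦X⟧ := ∏ m ∈ Icc 1 K, (1 - X^m) with hA
  set B : (ZMod 13)⟦X⟧ := ∏ m ∈ Icc 1 K, (1 - X^(2*m)) with hB
  have hdvd : (X:(ZMod 13)⟦X⟧)^K ∣ D * A^(3*k+1) - B^k := by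
    rw [PowerSeries.X_pow_dvd_iff]
    intro N hN
    rw [map_sub, sub_eq_zero]
    have hc1 : coeff (R := ZMod 13) N (D * A^(3*k+1))
        = coeff (R := ZMod 13) N (D * ∏ m ∈ Icc 1 N, (1 - X^m)^(3*k+1)) := by
      rw [hA, ← Finset.prod_pow]
      refine mx_coeff ?_ (Nat.lt_succ_self N)
      have hq := prod_tail_cong (A := ZMod 13) (g := fun m => (1 - X^m)^(3*k+1)) N
        (fun m hm => one_sub_xpow_pow_cong N m _ hm) (M := K) (by omega)
      have : D * (∏ m ∈ Icc 1 K, (1 - (X:(ZMod 13)⟦X⟧)^m)^(3*k+1))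
          - D * (∏ m ∈ Icc 1 N, (1 - X^m)^(3*k+1))
          = D * ((∏ m ∈ Icc 1 K, (1 - X^m)^(3*k+1)) - ∏ m ∈ Icc 1 N, (1 - X^m)^(3*k+1)) := by
        ring
      rw [this]
      exact hq.mul_left D
    have hc2 : coeff (R := ZMod 13) N (B^k)
        = coeff (R := ZMod 13) N (∏ m ∈ Icc 1 N, (1 - X^(2*m))^k) := by
      rw [hB, ← Finset.prod_pow]
      refine mx_coeff ?_ (Nat.lt_succ_self N)
      exact prod_tail_cong (A := ZMod 13) (g := fun m => (1 - X^(2*m))^k) N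
        (fun m hm => one_sub_xpow_pow_cong N (2*m) _ (by omega)) (M := K) (by omega)
    rw [hc1, hc2, hcoeff N]
  have hA13 : A^13 = ∏ m ∈ Icc 1 K, (1 - (X:(ZMod 13)⟦X⟧)^(13*m)) := by
    rw [hA, ← Finset.prod_pow]
    refine Finset.prod_congr rfl fun m _ => ?_
    rw [sub_pow_char (1 : (ZMod 13)⟦X⟧) (X^m) (p := 13), one_pow, ← pow_mul, mul_comm m 13]
  have hB13 : B^13 = ∏ m ∈ Icc 1 K, (1 - (X:(ZMod 13)⟦X⟧)^(13*(2*m))) := by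
    rw [hB, ← Finset.prod_pow]
    refine Finset.prod_congr rfl fun m _ => ?_
    rw [sub_pow_char (1 : (ZMod 13)⟦X⟧) (X^(2*m)) (p := 13), one_pow, ← pow_mul, mul_comm (2*m) 13]
  have hDh : (X:(ZMod 13)⟦X⟧)^K ∣ D * (A^13)^(3*j+1) - (B^13)^j * (B^3 * A^3) := by
    have e1 : (A^13)^(3*j+1) = A^(3*k+1) * A^3 := by
      rw [← pow_mul, show 13*(3*j+1) = 3*k+1+3 by omega, pow_add]
    have e2 : (B^13)^j * (B^3) = B^k := by
      rw [← pow_mul, ← pow_add, show 13*j+3 = k by omega]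
    have e3 : D * (A^13)^(3*j+1) - (B^13)^j * (B^3 * A^3)
        = (D * A^(3*k+1) - B^k) * A^3 := by
      rw [e1, show (B^13)^j * (B^3 * A^3) = ((B^13)^j * B^3) * A^3 by ring, e2]
      ring
    rw [e3]
    exact hdvd.mul_right _
  have hSuppH : Supp ((A^13)^(3*j+1)) := by
    rw [hA13]
    exact supp_pow (supp_prod fun m _ => supp_X13 m) _
  have hH0 : coeff (R := ZMod 13) 0 ((A^13)^(3*j+1)) = 1 := by
    rw [hA13, coeff_zero_eq_constantCoeff, map_pow, map_prod]
    have hone : ∀ m ∈ Icc 1 K, constantCoeff (R := ZMod 13) (1 - X^(13*m)) = 1 := by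
      intro m hm
      rw [Finset.mem_Icc] at hm
      rw [map_sub, map_one, map_pow, constantCoeff_X, zero_pow (by omega), sub_zero]
    rw [Finset.prod_congr rfl hone, Finset.prod_const_one, one_pow]
  set J1 : (ZMod 13)⟦X⟧ := ∑ i ∈ range K, (-1)^i * ((2*i+1:ℕ) : (ZMod 13)⟦X⟧) * X^(T i)
    with hJ1
  set J2 : (ZMod 13)⟦X⟧ := ∑ i ∈ range K, (-1)^i * ((2*i+1:ℕ) : (ZMod 13)⟦X⟧) * X^(2 * T i)
    with hJ2
  have hco1 : (X:(ZMod 13)⟦X⟧)^K ∣ A^3 - J1 := by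
    have hc := core (A := ZMod 13) 1 K le_rfl (by omega)
    have hpe := pq_eq (A := ZMod 13) 1 K
    simp only [one_mul, pow_one] at hc hpe
    rw [hA, hpe, hJ1]
    simpa using hc
  have hco2 : (X:(ZMod 13)⟦X⟧)^K ∣ B^3 - J2 := by
    have hc := core (A := ZMod 13) 2 K (by omega) (by omega)
    have hpe := pq_eq (A := ZMod 13) 2 K
    rw [hB, hpe, hJ2]
    exact hc
  have hcoJ : (X:(ZMod 13)⟦X⟧)^K ∣ A^3 * B^3 - J1 * J2 := mx_mul hco1 hco2
  have hdec : ∀ u v : ZMod 13, u^2 + 2*v^2 = 0 → u * v = 0 := by decide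
  have hJprod : ∀ y : ℕ, y % 13 = 11 → coeff (R := ZMod 13) y (J1 * J2) = 0 := by
    intro y hy
    rw [coeff_mul]
    refine Finset.sum_eq_zero fun p hp => ?_
    rw [Finset.HasAntidiagonal.mem_antidiagonal] at hp
    rw [hJ1, hJ2, map_sum, map_sum, Finset.sum_mul_sum]
    refine Finset.sum_eq_zero fun i _ => Finset.sum_eq_zero fun i' _ => ?_
    rw [coeff_jterm, coeff_jterm]
    split_ifs with h1 h2
    · -- p.1 = T i, p.2 = 2*T i'
      have h8 : 8*y + 3 = (2*i+1)^2 + 2*(2*i'+1)^2 := by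
        have t1 := two_T i
        have t2 := two_T i'
        have e1 : (2*i+1)^2 = 4*(i*(i+1)) + 1 := by ring
        have e2 : (2*i'+1)^2 = 4*(i'*(i'+1)) + 1 := by ring
        omega
      have hdvd13 : (13:ℕ) ∣ 8*y+3 := by omega
      have hz : ((2*i+1:ℕ) : ZMod 13)^2 + 2*((2*i'+1:ℕ) : ZMod 13)^2 = 0 := by
        have hc0 : ((8*y+3 : ℕ) : ZMod 13) = 0 := (ZMod.natCast_eq_zero_iff _ _).mpr hdvd13
        rw [h8] at hc0
        push_cast at hc0 ⊢
        linear_combination hc0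
      have hz2 := hdec _ _ hz
      linear_combination (((-1:ZMod 13))^i * ((-1:ZMod 13))^(i')) * hz2
    · ring
    · ring
    · ring
  have hgcoeff : ∀ c : ℕ, c < K → c % 13 = 11 →
      coeff (R := ZMod 13) c ((B^13)^j * (B^3*A^3)) = 0 := by
    intro c hcK hc11
    rw [coeff_mul]
    refine Finset.sum_eq_zero fun p hp => ?_
    rw [Finset.HasAntidiagonal.mem_antidiagonal] at hp
    by_cases h13 : 13 ∣ p.1
    · have hp2 : p.2 % 13 = 11 := by omega
      have hlt : p.2 < K := by omega
      have hcc : coeff (R := ZMod 13) p.2 (B^3*A^3) = coeff (R := ZMod 13) p.2 (J1 * J2) := by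
        have hswap : B^3*A^3 = A^3*B^3 := by ring
        rw [hswap]
        exact mx_coeff hcoJ hlt
      rw [hcc, hJprod p.2 hp2, mul_zero]
    · have hz : coeff (R := ZMod 13) p.1 ((B^13)^j) = 0 := by
        refine supp_pow ?_ j p.1 h13
        rw [hB13]
        exact supp_prod fun m _ => by
          have : 13*(2*m) = 13*(2*m) := rfl
          exact supp_X13 (2*m)
      rw [hz, zero_mul]
  have hmain : ∀ c : ℕ, c < K → c % 13 = 11 → coeff (R := ZMod 13) c D = 0 := by
    intro c
    induction c using Nat.strong_induction_on with
    | _ c ih =>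
      intro hcK hc11
      have h1 : coeff (R := ZMod 13) c (D * (A^13)^(3*j+1))
          = coeff (R := ZMod 13) c ((B^13)^j * (B^3*A^3)) := mx_coeff hDh hcK
      rw [hgcoeff c hcK hc11, coeff_mul] at h1
      have hsingle : ∑ p ∈ Finset.HasAntidiagonal.antidiagonal c,
          coeff (R := ZMod 13) p.1 D * coeff (R := ZMod 13) p.2 ((A^13)^(3*j+1))
          = coeff (R := ZMod 13) c D := by
        rw [Finset.sum_eq_single (c, 0)]
        · rw [hH0, mul_one]
        · intro p hp hne
          rw [Finset.HasAntidiagonal.mem_antidiagonal] at hp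
          have hb : p.2 ≠ 0 := by
            rintro h0
            apply hne
            have h1' : p.1 = c := by omega
            exact Prod.ext h1' h0
          by_cases h13 : 13 ∣ p.2
          · have hm11 : p.1 % 13 = 11 := by omega
            have hltc : p.1 < c := by omega
            rw [ih p.1 hltc (by omega) hm11, zero_mul]
          · rw [hSuppH p.2 h13, mul_zero]
        · intro habs
          exact absurd (by rw [Finset.HasAntidiagonal.mem_antidiagonal]; omega) habs
      rw [hsingle] at h1
      exact h1
  have hfin := hmain (13*n+11) (by omega) (by omega)
  rw [hD, PowerSeries.coeff_mk] at hfin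
  have := (ZMod.intCast_zmod_eq_zero_iff_dvd (d k (13*n+11)) 13).mp hfin
  simpa using this
end
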